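/- arXiv:1602.01384 — 3 statements merged into one kernel-verified Lean document; each statement's English description precedes it below -/
import Mathlib

section
/- (Barnes' first lemma.) Let λ₁, λ₂, μ₁, μ₂ ∈ ℂ all have positive real part. Then (1/(2π))·∫_{−∞}^{∞} Γ(λ₁+iτ)·Γ(λ₂+iτ)·Γ(μ₁−iτ)·Γ(μ₂−iτ) dτ = Γ(λ₁+μ₁)·Γ(λ₁+μ₂)·Γ(λ₂+μ₁)·Γ(λ₂+μ₂) / Γ(λ₁+λ₂+μ₁+μ₂). -/
open Complex Real MeasureTheory Set
open scoped FourierTransform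

noncomputable def BG (a c : ℂ) (u : ℝ) : ℂ :=
  Complex.exp (a * u - c * (Real.log (1 + Real.exp u) : ℝ))

lemma BG_pos (u : ℝ) : (0:ℝ) < 1 + Real.exp u := by positivity

lemma BG_norm (a c : ℂ) (u : ℝ) :
    ‖BG a c u‖ = Real.exp (a.re * u - c.re * Real.log (1 + Real.exp u)) := by
  rw [BG, Complex.norm_exp]
  congr 1
  simp [Complex.sub_re, Complex.mul_re]

lemma BG_continuous (a c : ℂ) : Continuous (BG a c) := by
  apply Complex.continuous_exp.comp
  exact (continuous_const.mul Complex.continuous_ofReal).sub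
    (continuous_const.mul (Complex.continuous_ofReal.comp
      ((continuous_const.add Real.continuous_exp).log (fun u => (BG_pos u).ne'))))

lemma BG_log_ge (u : ℝ) : max u 0 ≤ Real.log (1 + Real.exp u) := by
  rcases le_total u 0 with h | h
  · rw [max_eq_right h]
    exact Real.log_nonneg (by nlinarith [Real.exp_pos u])
  · rw [max_eq_left h]
    calc u = Real.log (Real.exp u) := (Real.log_exp u).symm
    _ ≤ _ := Real.log_le_log (Real.exp_pos u) (by linarith)

lemma exp_decay_integrable {δ : ℝ} (hδ : 0 < δ) :
    Integrable (fun u : ℝ => Real.exp (-δ * |u|)) := by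
  have h1 : IntegrableOn (fun u : ℝ => Real.exp (-δ * |u|)) (Ioi 0) := by
    apply (exp_neg_integrableOn_Ioi 0 hδ).congr_fun ?_ measurableSet_Ioi
    intro x hx
    simp only []
    rw [_root_.abs_of_pos hx]
  have h2 : IntegrableOn (fun u : ℝ => Real.exp (-δ * |u|)) (Iic 0) := by
    have he : MeasurePreserving (Neg.neg : ℝ → ℝ) volume volume :=
      Measure.measurePreserving_neg volume
    have := (he.integrableOn_comp_preimage
      (MeasurableEquiv.neg ℝ).measurableEmbedding
        (f := fun u : ℝ => Real.exp (-δ * |u|)) (s := Ici 0)).mpr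
      ((integrableOn_Ici_iff_integrableOn_Ioi).mpr h1)
    have hs : (Neg.neg : ℝ → ℝ) ⁻¹' (Ici 0) = Iic 0 := by
      ext x; simp
    rw [hs] at this
    apply this.congr_fun ?_ measurableSet_Iic
    intro x _
    simp [Function.comp, abs_neg]
  have := h2.union h1
  rwa [Set.Iic_union_Ioi, integrableOn_univ] at this

lemma BG_integrable {a c : ℂ} (ha : 0 < a.re) (hac : a.re < c.re) :
    Integrable (BG a c) := by
  set δ := min a.re (c.re - a.re) with hδdef
  have hδ : 0 < δ := lt_min ha (by linarith)
  apply Integrable.mono' (exp_decay_integrable hδ) (BG_continuous a c).aestronglyMeasurable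
  filter_upwards with u
  rw [BG_norm]
  apply Real.exp_le_exp.mpr
  have hL := BG_log_ge u
  have hL0 : 0 ≤ Real.log (1 + Real.exp u) := le_trans (le_max_right u 0) hL
  rcases le_total u 0 with h | h
  · rw [_root_.abs_of_nonpos h]
    have : δ ≤ a.re := min_le_left _ _
    nlinarith
  · rw [_root_.abs_of_nonneg h]
    have h1 : u ≤ Real.log (1 + Real.exp u) := le_trans (le_max_left u 0) hL
    have : δ ≤ c.re - a.re := min_le_right _ _
    nlinarith

-- σ(u) * BG a c u = BG (a+1) (c+1) u
lemma BG_sigma_mul (a c : ℂ) (u : ℝ) :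
    ((Real.exp u / (1 + Real.exp u) : ℝ) : ℂ) * BG a c u = BG (a + 1) (c + 1) u := by
  have h1 : ((Real.exp u / (1 + Real.exp u) : ℝ) : ℂ) =
      Complex.exp ((u : ℂ) - (Real.log (1 + Real.exp u) : ℝ)) := by
    rw [← Complex.ofReal_sub, ← Complex.ofReal_exp, Real.exp_sub, Real.exp_log (BG_pos u)]
  rw [h1, BG, BG, ← Complex.exp_add]
  congr 1
  ring

lemma BG_neg (a c : ℂ) (u : ℝ) : BG a c (-u) = BG (c - a) c u := by
  have h1 : Real.log (1 + Real.exp (-u)) = -u + Real.log (1 + Real.exp u) := by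
    have h2 : 1 + Real.exp (-u) = (1 + Real.exp u) * Real.exp (-u) := by
      rw [add_mul, one_mul, ← Real.exp_add]
      simp [add_comm]
    rw [h2, Real.log_mul (BG_pos u).ne' (Real.exp_ne_zero _), Real.log_exp]
    ring
  rw [BG, BG, h1]
  push_cast
  congr 1
  ring

lemma BG_hasDerivAt (a c : ℂ) (u : ℝ) :
    HasDerivAt (BG a c)
      ((a - c * ((Real.exp u / (1 + Real.exp u) : ℝ) : ℂ)) * BG a c u) u := by
  have hL : HasDerivAt (fun u : ℝ => Real.log (1 + Real.exp u))
      (Real.exp u / (1 + Real.exp u)) u :=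
    ((Real.hasDerivAt_exp u).const_add 1).log (BG_pos u).ne'
  have hφ : HasDerivAt (fun u : ℝ => a * (u : ℂ) - c * (Real.log (1 + Real.exp u) : ℝ))
      (a - c * ((Real.exp u / (1 + Real.exp u) : ℝ) : ℂ)) u := by
    have h1 : HasDerivAt (fun u : ℝ => (u : ℂ)) 1 u := by
      simpa using (hasDerivAt_id u).ofReal_comp
    have h2 := hL.ofReal_comp
    simpa using ((h1.const_mul a).fun_sub (h2.const_mul c))
  have := hφ.cexp
  rw [mul_comm] at this
  exact this

lemma BG_differentiable (a c : ℂ) : Differentiable ℝ (BG a c) :=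
  fun u => (BG_hasDerivAt a c u).differentiableAt

lemma BG_deriv (a c : ℂ) :
    deriv (BG a c) = fun u => a * BG a c u - c * BG (a + 1) (c + 1) u := by
  funext u
  rw [(BG_hasDerivAt a c u).deriv, ← BG_sigma_mul a c u]
  ring

noncomputable def Bsig (u : ℝ) : ℝ := Real.exp u / (1 + Real.exp u)

lemma Bsig_pos (u : ℝ) : 0 < Bsig u := by unfold Bsig; positivity

lemma Bsig_lt_one (u : ℝ) : Bsig u < 1 := by
  rw [Bsig, div_lt_one (BG_pos u)]
  linarith [Real.exp_pos u]

lemma Bsig_hasDerivAt (u : ℝ) :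
    HasDerivAt Bsig (Real.exp u / (1 + Real.exp u) ^ 2) u := by
  have h := (Real.hasDerivAt_exp u).div ((Real.hasDerivAt_exp u).const_add 1) (BG_pos u).ne'
  exact h.congr_deriv (by ring)

lemma Bsig_strictMono : StrictMono Bsig := by
  intro x y hxy
  rw [Bsig, Bsig, div_lt_div_iff₀ (BG_pos x) (BG_pos y)]
  have := Real.exp_lt_exp.mpr hxy
  nlinarith [Real.exp_pos x, Real.exp_pos y]

lemma Bsig_range : Bsig '' univ = Ioo 0 1 := by
  rw [image_univ]
  ext x
  constructor
  · rintro ⟨u, rfl⟩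
    exact ⟨Bsig_pos u, Bsig_lt_one u⟩
  · rintro ⟨hx0, hx1⟩
    refine ⟨Real.log (x / (1 - x)), ?_⟩
    have h1 : (0:ℝ) < 1 - x := by linarith
    have h2 : 0 < x / (1 - x) := div_pos hx0 h1
    rw [Bsig, Real.exp_log h2]
    field_simp
    ring

lemma BG_integral_eq_betaIntegral (a b : ℂ) :
    ∫ u : ℝ, BG a (a + b) u = Complex.betaIntegral a b := by
  have key := integral_image_eq_integral_abs_deriv_smul MeasurableSet.univ
    (f := Bsig) (f' := fun u => Real.exp u / (1 + Real.exp u) ^ 2)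
    (fun x _ => (Bsig_hasDerivAt x).hasDerivWithinAt)
    (Bsig_strictMono.injective.injOn)
    (fun x : ℝ => (x : ℂ) ^ (a - 1) * (1 - (x : ℂ)) ^ (b - 1))
  rw [Bsig_range] at key
  rw [Complex.betaIntegral, intervalIntegral.integral_of_le zero_le_one,
    integral_Ioc_eq_integral_Ioo, key, setIntegral_univ]
  apply integral_congr_ae
  filter_upwards with u
  -- pointwise identity
  set P : ℝ := 1 + Real.exp u with hP
  have hPpos : (0:ℝ) < P := BG_pos u
  set L : ℝ := Real.log P with hL
  have habs : |Real.exp u / P ^ 2| = Real.exp u / P ^ 2 := by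
    rw [abs_of_pos]; positivity
  have hσ : Bsig u = Real.exp u / P := rfl
  have h1mσ : (1 : ℂ) - (Bsig u : ℂ) = ((1 / P : ℝ) : ℂ) := by
    rw [hσ]
    push_cast
    rw [eq_div_iff (by exact_mod_cast hPpos.ne')]
    rw [sub_mul]
    rw [div_mul_cancel₀ _ (by exact_mod_cast hPpos.ne' : (P:ℂ) ≠ 0)]
    push_cast [hP]
    ring
  have hlogσ : Real.log (Bsig u) = u - L := by
    rw [hσ, Real.log_div (Real.exp_ne_zero u) hPpos.ne', Real.log_exp]
  have hcp1 : ((Bsig u : ℂ)) ^ (a - 1) = Complex.exp (((u - L : ℝ) : ℂ) * (a - 1)) := by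
    rw [Complex.cpow_def_of_ne_zero (by exact_mod_cast (Bsig_pos u).ne'),
      ← Complex.ofReal_log (Bsig_pos u).le, hlogσ]
  have hcp2 : (((1 / P : ℝ) : ℂ)) ^ (b - 1) = Complex.exp (((-L : ℝ) : ℂ) * (b - 1)) := by
    have hp : (0:ℝ) < 1 / P := by positivity
    rw [Complex.cpow_def_of_ne_zero (by exact_mod_cast hp.ne'),
      ← Complex.ofReal_log hp.le, Real.log_div one_ne_zero hPpos.ne', Real.log_one, hL]
    norm_num
  have hder : ((Real.exp u / P ^ 2 : ℝ) : ℂ) = Complex.exp (((u - 2 * L : ℝ) : ℂ)) := by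
    rw [← Complex.ofReal_exp]
    congr 1
    rw [Real.exp_sub, two_mul, Real.exp_add, Real.exp_log hPpos]
    ring
  rw [BG, Complex.real_smul, habs, hder, h1mσ, hcp1, hcp2, ← Complex.exp_add,
    ← Complex.exp_add]
  congr 1
  push_cast
  ring

lemma BG_fourier (a c : ℂ) (w : ℝ) :
    𝓕 (BG a c) w =
      Complex.betaIntegral (a - 2 * π * Complex.I * w) (c - a + 2 * π * Complex.I * w) := by
  rw [Real.fourier_real_eq_integral_exp_smul]
  have h : ∀ v : ℝ, Complex.exp ((-2 * π * v * w : ℝ) * Complex.I) • BG a c v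
      = BG (a - 2 * π * Complex.I * w) c v := by
    intro v
    rw [smul_eq_mul, BG, BG, ← Complex.exp_add]
    congr 1
    push_cast
    ring
  rw [show (∫ v : ℝ, Complex.exp ((-2 * π * v * w : ℝ) * Complex.I) • BG a c v)
      = ∫ v : ℝ, BG (a - 2 * π * Complex.I * w) c v from integral_congr_ae
        (Filter.Eventually.of_forall h)]
  have h2 := BG_integral_eq_betaIntegral (a - 2 * π * Complex.I * w)
    (c - a + 2 * π * Complex.I * w)
  have h3 : (a - 2 * π * Complex.I * w) + (c - a + 2 * π * Complex.I * w) = c := by ring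
  rw [h3] at h2
  exact h2

lemma BG_re_shift (a : ℂ) : (a + 1).re = a.re + 1 := by simp

lemma BG_deriv_integrable {a c : ℂ} (ha : 0 < a.re) (hac : a.re < c.re) :
    Integrable (deriv (BG a c)) := by
  rw [BG_deriv]
  exact ((BG_integrable ha hac).const_mul a).sub
    ((BG_integrable (by simp; linarith) (by simp; linarith)).const_mul c)

lemma BG_deriv_differentiable (a c : ℂ) : Differentiable ℝ (deriv (BG a c)) := by
  rw [BG_deriv]
  exact ((BG_differentiable a c).const_mul a).sub ((BG_differentiable _ _).const_mul c)

lemma BG_deriv2_integrable {a c : ℂ} (ha : 0 < a.re) (hac : a.re < c.re) :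
    Integrable (deriv (deriv (BG a c))) := by
  have h : deriv (deriv (BG a c)) =
      fun u => a * deriv (BG a c) u - c * deriv (BG (a + 1) (c + 1)) u := by
    conv_lhs => rw [BG_deriv]
    funext u
    rw [deriv_fun_sub (((BG_differentiable a c) u).const_mul a)
        (((BG_differentiable (a + 1) (c + 1)) u).const_mul c),
      deriv_const_mul a ((BG_differentiable a c) u),
      deriv_const_mul c ((BG_differentiable (a + 1) (c + 1)) u)]
  rw [h]
  exact ((BG_deriv_integrable ha hac).const_mul a).sub
    ((BG_deriv_integrable (by simp; linarith) (by simp; linarith)).const_mul c)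

lemma BG_fourier_norm_le {a c : ℂ} (ha : 0 < a.re) (hac : a.re < c.re) :
    ∃ C : ℝ, ∀ ξ : ℝ, ‖𝓕 (BG a c) ξ‖ ≤ C * (1 + ξ ^ 2)⁻¹ := by
  set g := BG a c
  have hg : Integrable g := BG_integrable ha hac
  have hg' : Integrable (deriv g) := BG_deriv_integrable ha hac
  have hg'' : Integrable (deriv (deriv g)) := BG_deriv2_integrable ha hac
  have h1 := Real.fourier_deriv hg (BG_differentiable a c) hg'
  have h2 := Real.fourier_deriv hg' (BG_deriv_differentiable a c) hg''
  set M0 := ∫ v : ℝ, ‖g v‖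
  set M2 := ∫ v : ℝ, ‖deriv (deriv g) v‖
  have hM0 : 0 ≤ M0 := integral_nonneg fun v => norm_nonneg _
  have hM2 : 0 ≤ M2 := integral_nonneg fun v => norm_nonneg _
  have hb0 : ∀ ξ : ℝ, ‖𝓕 g ξ‖ ≤ M0 := fun ξ =>
    VectorFourier.norm_fourierIntegral_le_integral_norm _ _ _ _ _
  have hb2 : ∀ ξ : ℝ, ‖𝓕 (deriv (deriv g)) ξ‖ ≤ M2 := fun ξ =>
    VectorFourier.norm_fourierIntegral_le_integral_norm _ _ _ _ _
  refine ⟨2 * M0 + M2 / (2 * π ^ 2), fun ξ => ?_⟩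
  have hπ := Real.pi_pos
  have ht : (0:ℝ) < 1 + ξ ^ 2 := by positivity
  rcases le_or_gt (ξ ^ 2) 1 with h | h
  · calc ‖𝓕 g ξ‖ ≤ M0 := hb0 ξ
    _ ≤ (2 * M0 + M2 / (2 * π ^ 2)) * (1 + ξ ^ 2)⁻¹ := by
        rw [← div_eq_mul_inv, le_div_iff₀ ht]
        have : 0 ≤ M2 / (2 * π ^ 2) := by positivity
        nlinarith
  · have hξ : 0 < |ξ| := abs_pos.mpr (by nlinarith)
    have key : ‖𝓕 (deriv (deriv g)) ξ‖ = (2 * π * |ξ|) ^ 2 * ‖𝓕 g ξ‖ := by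
      rw [h2, h1]
      simp only [smul_eq_mul]
      rw [norm_mul, norm_mul, norm_mul, norm_mul, norm_mul]
      simp [Complex.norm_real, Real.norm_eq_abs, abs_of_pos hπ]
      ring
    have h4 : ‖𝓕 g ξ‖ ≤ M2 / (2 * π * |ξ|) ^ 2 := by
      rw [le_div_iff₀ (by positivity : (0:ℝ) < (2 * π * |ξ|) ^ 2)]
      calc ‖𝓕 g ξ‖ * (2 * π * |ξ|) ^ 2 = (2 * π * |ξ|) ^ 2 * ‖𝓕 g ξ‖ := by ring
      _ = ‖𝓕 (deriv (deriv g)) ξ‖ := key.symm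
      _ ≤ M2 := hb2 ξ
    calc ‖𝓕 g ξ‖ ≤ M2 / (2 * π * |ξ|) ^ 2 := h4
    _ ≤ (2 * M0 + M2 / (2 * π ^ 2)) * (1 + ξ ^ 2)⁻¹ := by
        rw [← div_eq_mul_inv, div_le_div_iff₀ (by positivity) ht]
        have hsq : |ξ| ^ 2 = ξ ^ 2 := sq_abs ξ
        rw [mul_pow, mul_pow, hsq]
        have e2 : M2 / (2 * π ^ 2) * (2 ^ 2 * π ^ 2 * ξ ^ 2) = 2 * M2 * ξ ^ 2 := by
          field_simp
        nlinarith [e2, mul_le_mul_of_nonneg_left h.le hM2,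
          mul_nonneg (mul_nonneg hM0 (sq_nonneg π)) (sq_nonneg ξ)]

lemma BG_fourier_continuous {a c : ℂ} (ha : 0 < a.re) (hac : a.re < c.re) :
    Continuous (𝓕 (BG a c)) :=
  VectorFourier.fourierIntegral_continuous (L := innerₗ ℝ) Real.continuous_fourierChar
    (by exact continuous_inner) (BG_integrable ha hac)

lemma BG_fourier_integrable {a c : ℂ} (ha : 0 < a.re) (hac : a.re < c.re) :
    Integrable (𝓕 (BG a c)) := by
  obtain ⟨C, hC⟩ := BG_fourier_norm_le ha hac
  apply Integrable.mono' (integrable_inv_one_add_sq.const_mul C)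
    (BG_fourier_continuous ha hac).aestronglyMeasurable
  filter_upwards with ξ
  exact hC ξ

lemma BG_mul (a c a' c' : ℂ) (u : ℝ) :
    BG a c u * BG a' c' u = BG (a + a') (c + c') u := by
  rw [BG, BG, BG, ← Complex.exp_add]
  congr 1
  ring

lemma BG_parseval {a c a' c' : ℂ} (ha : 0 < a.re) (hac : a.re < c.re)
    (ha' : 0 < a'.re) (hac' : a'.re < c'.re) :
    ∫ ξ : ℝ, 𝓕 (BG a c) ξ * 𝓕 (BG a' c') ξ
      = ∫ u : ℝ, BG (a' + (c - a)) (c' + c) u := by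
  have hg1 : Integrable (BG a c) := BG_integrable ha hac
  have hg2 : Integrable (BG a' c') := BG_integrable ha' hac'
  have hF1 : Integrable (𝓕 (BG a c)) := BG_fourier_integrable ha hac
  set F : ℝ → ℝ → ℂ := fun ξ u =>
    𝓕 (BG a c) ξ * (Complex.exp ((-2 * π * u * ξ : ℝ) * Complex.I) * BG a' c' u) with hFdef
  have hFi : Integrable (Function.uncurry F) (volume.prod volume) := by
    apply Integrable.mono' (hF1.norm.mul_prod hg2.norm)
    · apply Continuous.aestronglyMeasurable
      apply Continuous.mul
      · exact (BG_fourier_continuous ha hac).comp continuous_fst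
      · apply Continuous.mul
        · apply Complex.continuous_exp.comp
          apply Continuous.mul ?_ continuous_const
          exact Complex.continuous_ofReal.comp (by continuity)
        · exact (BG_continuous a' c').comp continuous_snd
    · filter_upwards with p
      show ‖F p.1 p.2‖ ≤ _
      rw [hFdef]
      simp only []
      rw [norm_mul, norm_mul, Complex.norm_exp_ofReal_mul_I, one_mul]
  calc (∫ ξ : ℝ, 𝓕 (BG a c) ξ * 𝓕 (BG a' c') ξ) = ∫ ξ : ℝ, ∫ u : ℝ, F ξ u := by
        apply integral_congr_ae
        filter_upwards with ξ
        rw [Real.fourier_real_eq_integral_exp_smul (BG a' c') ξ, ← integral_const_mul]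
        apply integral_congr_ae
        filter_upwards with u
        rw [hFdef]
        simp only [smul_eq_mul]
  _ = ∫ u : ℝ, ∫ ξ : ℝ, F ξ u := integral_integral_swap hFi
  _ = ∫ u : ℝ, BG a' c' u * BG (c - a) c u := by
        apply integral_congr_ae
        filter_upwards with u
        have h1 : ∀ ξ : ℝ, F ξ u
            = BG a' c' u * (Complex.exp ((-2 * π * ξ * u : ℝ) * Complex.I) * 𝓕 (BG a c) ξ) := by
          intro ξ
          rw [hFdef]
          simp only []
          have harg : (-2 * π * u * ξ : ℝ) = (-2 * π * ξ * u : ℝ) := by ring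
          rw [harg]
          ring
        rw [integral_congr_ae (Filter.Eventually.of_forall h1), integral_const_mul]
        congr 1
        have h2 : (∫ ξ : ℝ, Complex.exp ((-2 * π * ξ * u : ℝ) * Complex.I) * 𝓕 (BG a c) ξ)
            = 𝓕 (𝓕 (BG a c)) u := by
          rw [Real.fourier_real_eq_integral_exp_smul]
          simp only [smul_eq_mul]
        rw [h2]
        have h3 := hg1.fourierInv_fourier_eq hF1 ((BG_continuous a c).continuousAt (x := -u))
        rwa [Real.fourierInv_eq_fourier_neg, neg_neg, BG_neg] at h3
  _ = ∫ u : ℝ, BG (a' + (c - a)) (c' + c) u := by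
        apply integral_congr_ae
        filter_upwards with u
        rw [BG_mul]

/-- Barnes' first lemma: for `λ₁, λ₂, μ₁, μ₂` of positive real part,
`(1/2π) ∫_{-∞}^{∞} Γ(λ₁+iτ)Γ(λ₂+iτ)Γ(μ₁−iτ)Γ(μ₂−iτ) dτ
  = Γ(λ₁+μ₁)Γ(λ₁+μ₂)Γ(λ₂+μ₁)Γ(λ₂+μ₂)/Γ(λ₁+λ₂+μ₁+μ₂)`. -/
theorem barnes_first_lemma (l₁ l₂ m₁ m₂ : ℂ)
    (hl₁ : 0 < l₁.re) (hl₂ : 0 < l₂.re) (hm₁ : 0 < m₁.re) (hm₂ : 0 < m₂.re) :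
    (1 / (2 * (π : ℂ))) *
        ∫ τ : ℝ,
          Complex.Gamma (l₁ + (τ : ℂ) * Complex.I) * Complex.Gamma (l₂ + (τ : ℂ) * Complex.I) *
            Complex.Gamma (m₁ - (τ : ℂ) * Complex.I) * Complex.Gamma (m₂ - (τ : ℂ) * Complex.I) =
      Complex.Gamma (l₁ + m₁) * Complex.Gamma (l₁ + m₂) * Complex.Gamma (l₂ + m₁) *
          Complex.Gamma (l₂ + m₂) / Complex.Gamma (l₁ + l₂ + m₁ + m₂) := by
  have hπ : (π : ℂ) ≠ 0 := Complex.ofReal_ne_zero.mpr Real.pi_ne_zero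
  set g₁ := BG l₁ (l₁ + m₁) with hg₁
  set g₂ := BG l₂ (l₂ + m₂) with hg₂
  -- pointwise identity for the integrand
  have key : ∀ τ : ℝ,
      Complex.Gamma (l₁ + (τ : ℂ) * Complex.I) * Complex.Gamma (l₂ + (τ : ℂ) * Complex.I) *
        Complex.Gamma (m₁ - (τ : ℂ) * Complex.I) * Complex.Gamma (m₂ - (τ : ℂ) * Complex.I)
      = (Complex.Gamma (l₁ + m₁) * Complex.Gamma (l₂ + m₂)) *
          ((fun ξ : ℝ => 𝓕 g₁ ξ * 𝓕 g₂ ξ) ((-(2 * π))⁻¹ * τ)) := by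
    intro τ
    have harg : ((-(2 * π))⁻¹ * τ : ℝ) = -τ / (2 * π) := by
      field_simp
    have e1 : 𝓕 g₁ ((-(2 * π))⁻¹ * τ)
        = Complex.betaIntegral (l₁ + (τ : ℂ) * Complex.I) (m₁ - (τ : ℂ) * Complex.I) := by
      rw [hg₁, BG_fourier, harg]
      congr 1
      · push_cast
        field_simp
        ring
      · push_cast
        field_simp
        ring
    have e2 : 𝓕 g₂ ((-(2 * π))⁻¹ * τ)
        = Complex.betaIntegral (l₂ + (τ : ℂ) * Complex.I) (m₂ - (τ : ℂ) * Complex.I) := by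
      rw [hg₂, BG_fourier, harg]
      congr 1
      · push_cast
        field_simp
        ring
      · push_cast
        field_simp
        ring
    have hre1 : 0 < (l₁ + (τ : ℂ) * Complex.I).re := by simp [hl₁]
    have hre2 : 0 < (m₁ - (τ : ℂ) * Complex.I).re := by simp [hm₁]
    have hre3 : 0 < (l₂ + (τ : ℂ) * Complex.I).re := by simp [hl₂]
    have hre4 : 0 < (m₂ - (τ : ℂ) * Complex.I).re := by simp [hm₂]
    have G1 := Complex.Gamma_mul_Gamma_eq_betaIntegral hre1 hre2
    have G2 := Complex.Gamma_mul_Gamma_eq_betaIntegral hre3 hre4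
    have hadd1 : l₁ + (τ : ℂ) * Complex.I + (m₁ - (τ : ℂ) * Complex.I) = l₁ + m₁ := by ring
    have hadd2 : l₂ + (τ : ℂ) * Complex.I + (m₂ - (τ : ℂ) * Complex.I) = l₂ + m₂ := by ring
    rw [hadd1] at G1
    rw [hadd2] at G2
    simp only []
    rw [e1, e2]
    calc Complex.Gamma (l₁ + (τ : ℂ) * Complex.I) * Complex.Gamma (l₂ + (τ : ℂ) * Complex.I) *
        Complex.Gamma (m₁ - (τ : ℂ) * Complex.I) * Complex.Gamma (m₂ - (τ : ℂ) * Complex.I)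
        = (Complex.Gamma (l₁ + (τ : ℂ) * Complex.I) * Complex.Gamma (m₁ - (τ : ℂ) * Complex.I)) *
          (Complex.Gamma (l₂ + (τ : ℂ) * Complex.I) * Complex.Gamma (m₂ - (τ : ℂ) * Complex.I)) := by
          ring
    _ = _ := by rw [G1, G2]; ring
  rw [integral_congr_ae (Filter.Eventually.of_forall key), integral_const_mul,
    Measure.integral_comp_mul_left (fun ξ : ℝ => 𝓕 g₁ ξ * 𝓕 g₂ ξ) ((-(2 * π))⁻¹)]
  rw [inv_inv, abs_neg, abs_of_pos (by positivity : (0:ℝ) < 2 * π)]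
  rw [hg₁, hg₂, BG_parseval hl₁ (by simp; linarith) hl₂ (by simp; linarith)]
  have hs1 : l₂ + (l₁ + m₁ - l₁) = l₂ + m₁ := by ring
  have hs2 : l₂ + m₂ + (l₁ + m₁) = (l₂ + m₁) + (l₁ + m₂) := by ring
  rw [hs1, hs2]
  have e3 := BG_integral_eq_betaIntegral (l₂ + m₁) (l₁ + m₂)
  rw [e3]
  have hre5 : 0 < (l₂ + m₁).re := by simp; linarith
  have hre6 : 0 < (l₁ + m₂).re := by simp; linarith
  have G3 := Complex.Gamma_mul_Gamma_eq_betaIntegral hre5 hre6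
  have hΓne : Complex.Gamma (l₂ + m₁ + (l₁ + m₂)) ≠ 0 :=
    Complex.Gamma_ne_zero_of_re_pos (by simp; linarith)
  have e4 : Complex.betaIntegral (l₂ + m₁) (l₁ + m₂)
      = Complex.Gamma (l₂ + m₁) * Complex.Gamma (l₁ + m₂) / Complex.Gamma (l₂ + m₁ + (l₁ + m₂)) := by
    rw [eq_div_iff hΓne, G3]
    ring
  rw [e4]
  have hsum : l₂ + m₁ + (l₁ + m₂) = l₁ + l₂ + m₁ + m₂ := by ring
  rw [hsum]
  rw [Complex.real_smul]
  push_cast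
  have hΓne2 : Complex.Gamma (l₁ + l₂ + m₁ + m₂) ≠ 0 :=
    Complex.Gamma_ne_zero_of_re_pos (by simp; linarith)
  field_simp
end

section
/- (Gauss's summation theorem.) Let a, b, c ∈ ℂ with c ∉ ℤ_{≤0} and Re(c−a−b) > 0. Then the series ₂F₁(a,b;c;1) = Σ_{k=0}^∞ (a)_k·(b)_k/((c)_k·k!) converges and equals Γ(c)·Γ(c−a−b) / (Γ(c−a)·Γ(c−b)). -/
open Complex Finset

/-- The Pochhammer symbol `(a)_k = a(a+1)⋯(a+k−1)` for `a : ℂ`. -/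
noncomputable def cpoch (a : ℂ) (k : ℕ) : ℂ := ∏ i ∈ Finset.range k, (a + (i : ℂ))

open Filter

noncomputable def T (a b c : ℂ) (k : ℕ) : ℂ :=
  cpoch a k * cpoch b k / (cpoch c k * (k.factorial : ℂ))

lemma cpoch_zero (a : ℂ) : cpoch a 0 = 1 := by simp [cpoch]

lemma cpoch_succ (a : ℂ) (k : ℕ) : cpoch a (k+1) = cpoch a k * (a + k) := by
  simp [cpoch, Finset.prod_range_succ]

lemma cpoch_succ' (a : ℂ) (k : ℕ) : cpoch a (k+1) = a * cpoch (a+1) k := by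
  rw [cpoch, Finset.prod_range_succ']
  simp only [Nat.cast_zero, add_zero, mul_comm]
  congr 1
  refine Finset.prod_congr rfl fun i _ => ?_
  push_cast; ring

lemma add_nat_ne_zero {c : ℂ} (hc : ∀ m : ℤ, m ≤ 0 → c ≠ (m : ℂ)) (k : ℕ) :
    c + k ≠ 0 := by
  intro h
  exact hc (-(k:ℤ)) (by simp) (by push_cast; linear_combination h)

lemma cpoch_ne_zero {c : ℂ} (hc : ∀ m : ℤ, m ≤ 0 → c ≠ (m : ℂ)) (k : ℕ) :
    cpoch c k ≠ 0 :=
  Finset.prod_ne_zero_iff.2 fun i _ => add_nat_ne_zero hc i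

lemma T_zero (a b c : ℂ) : T a b c 0 = 1 := by simp [T, cpoch_zero]

lemma T_succ {a b c : ℂ} (hc : ∀ m : ℤ, m ≤ 0 → c ≠ (m : ℂ)) (k : ℕ) :
    T a b c (k+1) = T a b c k * ((a + k) * (b + k) / ((c + k) * (k + 1))) := by
  have h1 := cpoch_ne_zero hc k
  have h2 := add_nat_ne_zero hc k
  have h3 : ((k.factorial : ℂ)) ≠ 0 := Nat.cast_ne_zero.2 k.factorial_ne_zero
  have h4 : ((k:ℂ) + 1) ≠ 0 := Nat.cast_add_one_ne_zero k
  rw [T, T, cpoch_succ a, cpoch_succ b, cpoch_succ c, Nat.factorial_succ]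
  push_cast
  field_simp

lemma term_identity {a b c : ℂ} (hc : ∀ m : ℤ, m ≤ 0 → c ≠ (m : ℂ)) (k : ℕ) :
    c * (c - a - b) * T a b c k - (c - a) * (c - b) * T a b (c+1) k =
      c * k * T a b c k - c * (k+1) * T a b c (k+1) := by
  have h1 := cpoch_ne_zero hc k
  have h2 := add_nat_ne_zero hc k
  have h0 : c ≠ 0 := by simpa using add_nat_ne_zero hc 0
  have h3 : ((k.factorial : ℂ)) ≠ 0 := Nat.cast_ne_zero.2 k.factorial_ne_zero
  have h4 : ((k:ℂ) + 1) ≠ 0 := Nat.cast_add_one_ne_zero k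
  have hP : c * cpoch (c+1) k = cpoch c k * (c + k) := by
    rw [← cpoch_succ' c k, cpoch_succ c k]
  have hP' : cpoch (c+1) k = cpoch c k * (c + k) / c := by
    field_simp; linear_combination hP
  rw [T_succ hc k, T, T, hP']
  field_simp
  ring

lemma abs_hasDerivAt (z : ℂ) : HasDerivAt (fun x : ℝ => ‖1 + x * z‖) z.re 0 := by
  have hq : HasDerivAt (fun x : ℝ => (1 + x * z.re)^2 + (x * z.im)^2) (2 * z.re) 0 := by
    have h1 : HasDerivAt (fun x : ℝ => (1 + x * z.re)^2) (2 * z.re) 0 := by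
      have := ((hasDerivAt_id (0:ℝ)).mul_const z.re).const_add 1
      have := this.pow 2
      simpa [Pi.pow_def] using this
    have h2 : HasDerivAt (fun x : ℝ => (x * z.im)^2) 0 0 := by
      have := ((hasDerivAt_id (0:ℝ)).mul_const z.im).pow 2
      simpa [Pi.pow_def] using this
    simpa [Pi.add_def] using h1.add h2
  have hs : HasDerivAt Real.sqrt (1/2) ((fun x : ℝ => (1 + x * z.re)^2 + (x * z.im)^2) 0) := by
    simp only [zero_mul, add_zero, mul_zero]
    norm_num
    simpa using Real.hasDerivAt_sqrt (one_ne_zero)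
  have := hs.comp 0 hq
  have heq : (fun x : ℝ => Real.sqrt ((1 + x * z.re)^2 + (x * z.im)^2))
      = fun x : ℝ => ‖1 + x * z‖ := by
    funext x
    rw [Complex.norm_def, Complex.normSq_apply]
    simp [Complex.add_re, Complex.add_im, Complex.mul_re, Complex.mul_im, Complex.ofReal_re,
      Complex.ofReal_im, sq]
  rw [Function.comp_def, heq] at this
  refine this.congr_deriv ?_
  ring

lemma g_hasDerivAt (a b c : ℂ) :
    HasDerivAt (fun x : ℝ => ‖1 + x * a‖ * ‖1 + x * b‖
      / ((1 + x) * ‖1 + x * c‖)) (a.re + b.re - 1 - c.re) 0 := by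
  have hnum : HasDerivAt (fun x : ℝ => ‖1 + x * a‖ * ‖1 + x * b‖)
      (a.re + b.re) 0 := by
    have := (abs_hasDerivAt a).mul (abs_hasDerivAt b)
    simpa [Pi.mul_def] using this
  have hden : HasDerivAt (fun x : ℝ => (1 + x) * ‖1 + x * c‖) (1 + c.re) 0 := by
    have h1 : HasDerivAt (fun x : ℝ => (1 : ℝ) + x) 1 0 := by
      simpa using (hasDerivAt_id (0:ℝ)).const_add 1
    have := h1.mul (abs_hasDerivAt c)
    simpa [Pi.mul_def] using this
  have hd0 : ((fun x : ℝ => (1 + x) * ‖1 + x * c‖) 0) ≠ 0 := by simp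
  have := hnum.div hden hd0
  refine this.congr_deriv ?_
  simp
  ring

lemma slope_lim {f : ℝ → ℝ} {d : ℝ} (hf : HasDerivAt f d 0) :
    Tendsto (fun k : ℕ => (k : ℝ) * (f (1/(k:ℝ)) - f 0)) atTop (nhds d) := by
  have hs := hasDerivAt_iff_tendsto_slope.1 hf
  have hk : Tendsto (fun k : ℕ => 1/(k:ℝ)) atTop (nhdsWithin 0 {0}ᶜ) := by
    apply tendsto_nhdsWithin_of_tendsto_nhds_of_eventually_within
    · exact tendsto_one_div_atTop_nhds_zero_nat
    · filter_upwards [eventually_gt_atTop 0] with k hk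
      simp only [Set.mem_compl_iff, Set.mem_singleton_iff]
      positivity
  have := hs.comp hk
  apply this.congr'
  filter_upwards [eventually_gt_atTop 0] with k hk
  have hk' : (k:ℝ) ≠ 0 := by positivity
  simp only [Function.comp_apply, slope_def_field]
  rw [div_eq_iff (by simp [hk'] : (1/(k:ℝ) - 0) ≠ 0)]
  field_simp
  ring

lemma rpow_hasDerivAt (p : ℝ) : HasDerivAt (fun x : ℝ => (1 + x) ^ p) p 0 := by
  have h1 : HasDerivAt (fun x : ℝ => (1 : ℝ) + x) 1 0 := by
    simpa using (hasDerivAt_id (0:ℝ)).const_add 1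
  have := h1.rpow_const (p := p) (Or.inl (by norm_num))
  simpa using this

lemma ratio_eventually (a b c : ℂ) {s' : ℝ} (hs : a.re + b.re - 1 - c.re < s') :
    ∀ᶠ k : ℕ in atTop, ‖a + k‖ * ‖b + k‖
      / (‖c + k‖ * ((k:ℝ) + 1)) ≤ (((k:ℝ) + 1) / k) ^ s' := by
  have l1 := slope_lim (g_hasDerivAt a b c)
  have l2 := slope_lim (rpow_hasDerivAt s')
  have hev := l1.eventually_lt l2 hs
  filter_upwards [hev, eventually_gt_atTop 0] with k hlt hk
  have hk0 : (0:ℝ) < (k:ℝ) := by exact_mod_cast hk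
  have hkne : (k:ℝ) ≠ 0 := ne_of_gt hk0
  have hkcne : ((k:ℕ):ℂ) ≠ 0 := by exact_mod_cast hkne
  norm_num [Real.one_rpow] at hlt
  have habs : ∀ z : ℂ, ‖1 + ((k:ℂ))⁻¹ * z‖ = ‖z + k‖ / k := by
    intro z
    have he : (1:ℂ) + ((k:ℂ))⁻¹ * z = (z + k) / k := by
      push_cast
      field_simp
      ring
    rw [he, norm_div, Complex.norm_natCast]
  have hC' : (0:ℝ) ≤ ‖c + k‖ := norm_nonneg _
  have hg : ‖1 + ((k:ℂ))⁻¹ * a‖ * ‖1 + ((k:ℂ))⁻¹ * b‖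
      / ((1 + ((k:ℝ)⁻¹)) * ‖1 + ((k:ℂ))⁻¹ * c‖)
      = ‖a + k‖ * ‖b + k‖ / (‖c + k‖ * ((k:ℝ) + 1)) := by
    rw [habs a, habs b, habs c]
    rcases eq_or_lt_of_le hC' with hC | hC
    · rw [← hC]; simp
    · rw [div_eq_div_iff (by positivity) (by positivity)]
      field_simp
  have hpsi : ((1:ℝ) + ((k:ℝ))⁻¹) ^ s' = (((k:ℝ) + 1) / k) ^ s' := by
    congr 1
    field_simp
  have h2 := (mul_lt_mul_iff_right₀ hk0).1 hlt
  rw [hg, hpsi] at h2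
  linarith

lemma T_succ_abs {a b c : ℂ} (hc : ∀ m : ℤ, m ≤ 0 → c ≠ (m : ℂ)) (k : ℕ) :
    ‖T a b c (k+1)‖ = ‖T a b c k‖ *
      (‖a + k‖ * ‖b + k‖ / (‖c + k‖ * ((k:ℝ) + 1))) := by
  rw [T_succ hc k, norm_mul, norm_div, norm_mul, norm_mul]
  congr 1
  have : ((k:ℂ) + 1) = (((k+1:ℕ)):ℂ) := by push_cast; ring
  rw [this, Complex.norm_natCast]
  push_cast
  ring

lemma bound_exists (a b c : ℂ) (hc : ∀ m : ℤ, m ≤ 0 → c ≠ (m : ℂ))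
    (h : 0 < (c - a - b).re) :
    ∃ C : ℝ, 0 ≤ C ∧ ∀ k : ℕ, 1 ≤ k →
      ‖T a b c k‖ ≤ C * (k:ℝ) ^ ((a.re + b.re - c.re - 2)/2) := by
  set s' : ℝ := (a.re + b.re - c.re - 2)/2 with hs'def
  have hre : a.re + b.re - c.re < 0 := by
    have : 0 < c.re - a.re - b.re := by simpa [Complex.sub_re] using h
    linarith
  have hs1 : a.re + b.re - 1 - c.re < s' := by rw [hs'def]; linarith
  have hs2 : s' < -1 := by rw [hs'def]; linarith
  obtain ⟨K0, hK0⟩ := (ratio_eventually a b c hs1).exists_forall_of_atTop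
  set K := max K0 1 with hKdef
  have hK1 : 1 ≤ K := le_max_right _ _
  have hK : ∀ k, K ≤ k → ‖a + k‖ * ‖b + k‖
      / (‖c + k‖ * ((k:ℝ) + 1)) ≤ (((k:ℝ) + 1) / k) ^ s' :=
    fun k hk => hK0 k (le_trans (le_max_left _ _) hk)
  set C : ℝ := ∑ j ∈ Finset.Icc 1 K, ‖T a b c j‖ / (j:ℝ) ^ s' with hCdef
  have hterm_nonneg : ∀ j ∈ Finset.Icc 1 K, 0 ≤ ‖T a b c j‖ / (j:ℝ) ^ s' := by
    intro j hj
    have : (0:ℝ) < (j:ℝ) ^ s' := by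
      have : 0 < j := (Finset.mem_Icc.1 hj).1
      have : (0:ℝ) < (j:ℝ) := by exact_mod_cast this
      positivity
    positivity
  have hC0 : 0 ≤ C := Finset.sum_nonneg hterm_nonneg
  have claim1 : ∀ k : ℕ, 1 ≤ k → k ≤ K → ‖T a b c k‖ ≤ C * (k:ℝ) ^ s' := by
    intro k h1 h2
    have hkpos : (0:ℝ) < (k:ℝ) := by exact_mod_cast h1
    have hkp : (0:ℝ) < (k:ℝ) ^ s' := by positivity
    have hmem : k ∈ Finset.Icc 1 K := Finset.mem_Icc.2 ⟨h1, h2⟩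
    have := Finset.single_le_sum hterm_nonneg hmem
    calc ‖T a b c k‖ = (‖T a b c k‖ / (k:ℝ) ^ s') * (k:ℝ) ^ s' := by
          field_simp
      _ ≤ C * (k:ℝ) ^ s' := by
          apply mul_le_mul_of_nonneg_right _ hkp.le
          exact this
  have claim2 : ∀ k : ℕ, K ≤ k → ‖T a b c k‖ ≤ C * (k:ℝ) ^ s' := by
    intro k hk
    induction k, hk using Nat.le_induction with
    | base => exact claim1 K hK1 le_rfl
    | succ k hk ih =>
      have hk1 : 1 ≤ k := le_trans hK1 hk
      have hkpos : (0:ℝ) < (k:ℝ) := by exact_mod_cast hk1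
      have hrho := hK k hk
      rw [T_succ_abs hc k]
      have h1 : ‖T a b c k‖ *
          (‖a + k‖ * ‖b + k‖ / (‖c + k‖ * ((k:ℝ) + 1)))
          ≤ (C * (k:ℝ) ^ s') * ((((k:ℝ) + 1) / k) ^ s') := by
        apply mul_le_mul ih hrho (by positivity) (by positivity)
      refine h1.trans (le_of_eq ?_)
      rw [Real.div_rpow (by positivity) hkpos.le]
      have hkne : ((k:ℝ)) ^ s' ≠ 0 := by positivity
      have hcast : (((k+1:ℕ)):ℝ) = (k:ℝ) + 1 := by push_cast; ring
      rw [hcast]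
      field_simp
  refine ⟨C, hC0, fun k h1 => ?_⟩
  rcases le_total k K with h2 | h2
  · exact claim1 k h1 h2
  · exact claim2 k h2

lemma T_summable (a b c : ℂ) (hc : ∀ m : ℤ, m ≤ 0 → c ≠ (m : ℂ))
    (h : 0 < (c - a - b).re) : Summable (T a b c) := by
  obtain ⟨C, hC0, hC⟩ := bound_exists a b c hc h
  set s' : ℝ := (a.re + b.re - c.re - 2)/2 with hs'def
  have hs2 : s' < -1 := by
    have : 0 < c.re - a.re - b.re := by simpa [Complex.sub_re] using h
    rw [hs'def]; linarith
  rw [← summable_nat_add_iff 1]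
  have hmaj : Summable (fun n : ℕ => C * ((n+1:ℕ):ℝ) ^ s') := by
    have h1 : Summable (fun n : ℕ => ((n:ℝ)) ^ s') := Real.summable_nat_rpow.2 hs2
    exact ((summable_nat_add_iff 1).2 h1).mul_left C
  apply Summable.of_norm_bounded hmaj
  intro n
  have := hC (n+1) (Nat.le_add_left 1 n)
  convert this using 3 <;> push_cast <;> ring

lemma T_mul_tendsto_zero (a b c : ℂ) (hc : ∀ m : ℤ, m ≤ 0 → c ≠ (m : ℂ))
    (h : 0 < (c - a - b).re) :
    Filter.Tendsto (fun k : ℕ => (k:ℝ) * ‖T a b c k‖) Filter.atTop (nhds 0) := by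
  obtain ⟨C, hC0, hC⟩ := bound_exists a b c hc h
  set s' : ℝ := (a.re + b.re - c.re - 2)/2 with hs'def
  have hs2 : s' < -1 := by
    have : 0 < c.re - a.re - b.re := by simpa [Complex.sub_re] using h
    rw [hs'def]; linarith
  have hmaj : Filter.Tendsto (fun k : ℕ => C * ((k:ℝ) ^ (s' + 1))) Filter.atTop (nhds 0) := by
    have h1 : Filter.Tendsto (fun x : ℝ => x ^ (-(-(s'+1)))) Filter.atTop (nhds 0) :=
      tendsto_rpow_neg_atTop (by linarith)
    have h2 := h1.comp (tendsto_natCast_atTop_atTop (R := ℝ))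
    simp only [neg_neg] at h2
    simpa using (h2.const_mul C)
  apply squeeze_zero' (Filter.Eventually.of_forall fun k => by positivity)
  · filter_upwards [Filter.eventually_ge_atTop 1] with k hk
    have hkpos : (0:ℝ) < (k:ℝ) := by exact_mod_cast hk
    calc (k:ℝ) * ‖T a b c k‖ ≤ (k:ℝ) * (C * (k:ℝ) ^ s') := by
          exact mul_le_mul_of_nonneg_left (hC k hk) hkpos.le
      _ = C * (k:ℝ) ^ (s' + 1) := by
          rw [Real.rpow_add hkpos, Real.rpow_one]
          ring
  · exact hmaj

lemma hc_shift {c : ℂ} (hc : ∀ m : ℤ, m ≤ 0 → c ≠ (m : ℂ)) (n : ℕ) :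
    ∀ m : ℤ, m ≤ 0 → c + n ≠ (m : ℂ) := by
  intro m hm he
  refine hc (m - n) (by omega) ?_
  push_cast
  linear_combination he

lemma h_shift {a b c : ℂ} (h : 0 < (c - a - b).re) (n : ℕ) :
    0 < (c + n - a - b).re := by
  have : (c + n - a - b).re = (c - a - b).re + n := by
    simp [Complex.add_re, Complex.sub_re, Complex.natCast_re]
    ring
  rw [this]
  positivity

lemma step_eq (a b c : ℂ) (hc : ∀ m : ℤ, m ≤ 0 → c ≠ (m : ℂ))
    (h : 0 < (c - a - b).re) :
    c * (c - a - b) * ∑' k, T a b c k = (c - a) * (c - b) * ∑' k, T a b (c+1) k := by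
  have hc1 : ∀ m : ℤ, m ≤ 0 → c + 1 ≠ (m : ℂ) := by
    simpa using hc_shift hc 1
  have h1 : 0 < (c + 1 - a - b).re := by simpa using h_shift h 1
  have hS := (T_summable a b c hc h).hasSum.tendsto_sum_nat
  have hS' := (T_summable a b (c+1) hc1 h1).hasSum.tendsto_sum_nat
  have hpartial : ∀ n : ℕ,
      c * (c - a - b) * (∑ k ∈ Finset.range n, T a b c k)
        - (c - a) * (c - b) * (∑ k ∈ Finset.range n, T a b (c+1) k)
        = - (c * n * T a b c n) := by
    intro n
    have := Finset.sum_range_sub' (fun k => c * k * T a b c k) n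
    calc c * (c - a - b) * (∑ k ∈ Finset.range n, T a b c k)
          - (c - a) * (c - b) * (∑ k ∈ Finset.range n, T a b (c+1) k)
        = ∑ k ∈ Finset.range n,
            (c * (c - a - b) * T a b c k - (c - a) * (c - b) * T a b (c+1) k) := by
          rw [Finset.sum_sub_distrib, Finset.mul_sum, Finset.mul_sum]
      _ = ∑ k ∈ Finset.range n, (c * k * T a b c k - c * (k+1) * T a b c (k+1)) := by
          exact Finset.sum_congr rfl fun k _ => term_identity hc k
      _ = c * 0 * T a b c 0 - c * n * T a b c n := by
          have := Finset.sum_range_sub' (fun k : ℕ => c * k * T a b c k) n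
          simpa using this
      _ = - (c * n * T a b c n) := by simp
  have hlim1 : Filter.Tendsto (fun n : ℕ =>
      c * (c - a - b) * (∑ k ∈ Finset.range n, T a b c k)
        - (c - a) * (c - b) * (∑ k ∈ Finset.range n, T a b (c+1) k)) Filter.atTop
      (nhds (c * (c - a - b) * ∑' k, T a b c k - (c - a) * (c - b) * ∑' k, T a b (c+1) k)) :=
    (hS.const_mul _).sub (hS'.const_mul _)
  have hlim2 : Filter.Tendsto (fun n : ℕ => - (c * n * T a b c n)) Filter.atTop (nhds 0) := by
    rw [← neg_zero]
    apply Filter.Tendsto.neg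
    rw [tendsto_zero_iff_norm_tendsto_zero]
    have := (T_mul_tendsto_zero a b c hc h).const_mul (‖c‖)
    rw [mul_zero] at this
    apply this.congr
    intro n
    rw [norm_mul, norm_mul,
      Complex.norm_natCast]
    ring
  have := tendsto_nhds_unique (hlim1.congr fun n => (hpartial n)) hlim2
  have h2 : c * (c - a - b) * ∑' k, T a b c k
      - (c - a) * (c - b) * ∑' k, T a b (c+1) k = 0 := this
  linear_combination h2

lemma iterate_eq (a b c : ℂ) (hc : ∀ m : ℤ, m ≤ 0 → c ≠ (m : ℂ))
    (h : 0 < (c - a - b).re) (n : ℕ) :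
    cpoch c n * cpoch (c-a-b) n * ∑' k, T a b c k
      = cpoch (c-a) n * cpoch (c-b) n * ∑' k, T a b (c + n) k := by
  induction n with
  | zero => simp [cpoch_zero]
  | succ n ih =>
    have hstep := step_eq a b (c + n) (hc_shift hc n) (h_shift h n)
    have hcast : (c + (n:ℂ)) + 1 = c + ((n+1 : ℕ) : ℂ) := by push_cast; ring
    rw [hcast] at hstep
    rw [cpoch_succ c n, cpoch_succ (c-a-b) n, cpoch_succ (c-a) n, cpoch_succ (c-b) n]
    have e1 : c - a - b + n = (c + n) - a - b := by ring
    have e2 : c - a + n = (c + n) - a := by ring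
    have e3 : c - b + n = (c + n) - b := by ring
    calc cpoch c n * (c + n) * (cpoch (c-a-b) n * (c - a - b + n)) * ∑' k, T a b c k
        = (cpoch c n * cpoch (c-a-b) n * ∑' k, T a b c k) * ((c+n) * ((c+n) - a - b)) := by
          rw [e1]; ring
      _ = (cpoch (c-a) n * cpoch (c-b) n * ∑' k, T a b (c + n) k)
            * ((c+n) * ((c+n) - a - b)) := by rw [ih]
      _ = (cpoch (c-a) n * cpoch (c-b) n) *
            ((c+n) * ((c+n) - a - b) * ∑' k, T a b (c + n) k) := by ring
      _ = (cpoch (c-a) n * cpoch (c-b) n) *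
            (((c+n) - a) * ((c+n) - b) * ∑' k, T a b (c + ((n+1:ℕ):ℂ)) k) := by
          rw [hstep]
      _ = cpoch (c-a) n * (c - a + n) * (cpoch (c-b) n * (c - b + n))
            * ∑' k, T a b (c + ((n+1:ℕ):ℂ)) k := by rw [e2, e3]; ring

lemma prod_bound {B n' : ℝ} (hB : 1 ≤ B) (hn : B + 2 ≤ n') :
    ∀ k : ℕ, 1 ≤ k → ∏ i ∈ Finset.range k, (B + i) / (n' + i)
      ≤ (B+2)/n' * (B*(B+1)/((B+k)*(B+k+1))) := by
  intro k hk
  have hn0 : (0:ℝ) < n' := by linarith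
  induction k, hk using Nat.le_induction with
  | base =>
    simp only [Finset.range_one, Finset.prod_singleton, Nat.cast_zero, add_zero, Nat.cast_one]
    rw [div_mul_div_comm]
    apply le_of_eq
    rw [div_eq_div_iff (by positivity) (by positivity)]
    ring
  | succ k hk ih =>
    rw [Finset.prod_range_succ]
    have hkR : (1:ℝ) ≤ (k:ℝ) := by exact_mod_cast hk
    have hfac : (B + k) / (n' + k) ≤ (B + k) / (B + 2 + k) := by
      apply div_le_div_of_nonneg_left (by linarith) (by linarith) (by linarith)
    have hprod_nonneg : (0:ℝ) ≤ ∏ i ∈ Finset.range k, (B + i) / (n' + i) := by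
      apply Finset.prod_nonneg
      intro i _
      have : (0:ℝ) ≤ (i:ℝ) := Nat.cast_nonneg i
      positivity
    calc (∏ i ∈ Finset.range k, (B + i) / (n' + i)) * ((B + k) / (n' + k))
        ≤ ((B+2)/n' * (B*(B+1)/((B+k)*(B+k+1)))) * ((B + k) / (B + 2 + k)) := by
          apply mul_le_mul ih hfac (by positivity) (by positivity)
      _ = (B+2)/n' * (B*(B+1)/((B+(k+1:ℕ))*(B+(k+1:ℕ)+1))) := by
          push_cast
          have h1 : n' ≠ 0 := by positivity
          have h2 : B + (k:ℝ) ≠ 0 := by positivity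
          have h3 : B + (k:ℝ) + 1 ≠ 0 := by positivity
          have h4 : B + 2 + (k:ℝ) ≠ 0 := by positivity
          have h5 : B + ((k:ℝ) + 1) ≠ 0 := by positivity
          have h6 : B + ((k:ℝ) + 1) + 1 ≠ 0 := by positivity
          field_simp
          ring

lemma T_eq_prod {a b c : ℂ} (hc : ∀ m : ℤ, m ≤ 0 → c ≠ (m : ℂ)) (k : ℕ) :
    T a b c k = ∏ i ∈ Finset.range k, ((a + i) * (b + i) / ((c + i) * ((i:ℂ) + 1))) := by
  induction k with
  | zero => simp [T_zero]
  | succ k ih => rw [Finset.prod_range_succ, ← ih, T_succ hc k]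

lemma T_abs_bound (a b : ℂ) {c : ℂ} (hc : ∀ m : ℤ, m ≤ 0 → c ≠ (m : ℂ))
    (hcre : 0 < c.re) {A B : ℝ} (hA1 : 1 ≤ A) (hBdef : B = A^2)
    (ha : ‖a‖ ≤ A) (hb : ‖b‖ ≤ A)
    (k : ℕ) (hk : 1 ≤ k) (hn : B + 2 ≤ c.re) :
    ‖T a b c k‖ ≤ (B+2)/c.re * (B*(B+1)/((k:ℝ)*(k:ℝ))) := by
  have hBA : B = A^2 := hBdef
  have hB1 : (1:ℝ) ≤ B := by nlinarith [hBA, hA1]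
  have hn0 : (0:ℝ) < c.re := hcre
  have habs : ‖T a b c k‖
      = ∏ i ∈ Finset.range k, ‖(a + i) * (b + i) / ((c + i) * ((i:ℂ) + 1))‖ := by
    rw [T_eq_prod hc k]
    exact norm_prod _ _
  have hfac : ∀ i : ℕ, ‖(a + i) * (b + i) / ((c + i) * ((i:ℂ) + 1))‖
      ≤ (B + i) / (c.re + i) := by
    intro i
    have hi0 : (0:ℝ) ≤ (i:ℝ) := Nat.cast_nonneg i
    rw [norm_div, norm_mul, norm_mul]
    have ha' : ‖a + i‖ ≤ A + i := by
      calc ‖a + i‖ ≤ ‖a‖ + ‖(i:ℂ)‖ := norm_add_le _ _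
        _ ≤ A + i := by
            rw [Complex.norm_natCast]
            linarith [ha]
    have hb' : ‖b + i‖ ≤ A + i := by
      calc ‖b + i‖ ≤ ‖b‖ + ‖(i:ℂ)‖ := norm_add_le _ _
        _ ≤ A + i := by
            rw [Complex.norm_natCast]
            linarith [hb]
    have hc' : (c.re + i) ≤ ‖c + i‖ := by
      calc (c.re + i) = (c + i).re := by simp
        _ ≤ ‖c + i‖ := Complex.re_le_norm _
    have hi1 : ‖(i:ℂ) + 1‖ = (i:ℝ) + 1 := by
      have : ((i:ℂ) + 1) = (((i+1:ℕ)):ℂ) := by push_cast; ring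
      rw [this, Complex.norm_natCast]
      push_cast; ring
    rw [hi1]
    have hden_pos : (0:ℝ) < (c.re + i) * ((i:ℝ) + 1) := by positivity
    have hden_le : (c.re + i) * ((i:ℝ) + 1) ≤ ‖c + i‖ * ((i:ℝ) + 1) := by
      apply mul_le_mul_of_nonneg_right hc' (by positivity)
    calc ‖a + i‖ * ‖b + i‖ / (‖c + i‖ * ((i:ℝ) + 1))
        ≤ (A + i) * (A + i) / ((c.re + i) * ((i:ℝ) + 1)) := by
          apply div_le_div₀ (by positivity)
            (mul_le_mul ha' hb' (norm_nonneg _) (by linarith)) hden_pos hden_le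
      _ ≤ (B + i) / (c.re + i) := by
          rw [div_le_div_iff₀ (by positivity) (by positivity)]
          have hkey : (A + i) * (A + i) ≤ (B + i) * ((i:ℝ) + 1) := by
            nlinarith [sq_nonneg (A - 1), hi0, hBA, hA1]
          nlinarith [hkey, hi0, hn0]
  have h1 : ‖T a b c k‖ ≤ ∏ i ∈ Finset.range k, (B + i) / (c.re + i) := by
    rw [habs]
    apply Finset.prod_le_prod (fun i _ => norm_nonneg _) (fun i _ => hfac i)
  have h2 := prod_bound hB1 hn k hk
  refine h1.trans (h2.trans ?_)
  have hkR : (1:ℝ) ≤ (k:ℝ) := by exact_mod_cast hk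
  apply mul_le_mul_of_nonneg_left _ (by positivity)
  apply div_le_div_of_nonneg_left (by nlinarith) (by positivity) (by nlinarith)

lemma G_tendsto_one (a b c : ℂ) (hc : ∀ m : ℤ, m ≤ 0 → c ≠ (m : ℂ))
    (h : 0 < (c - a - b).re) :
    Filter.Tendsto (fun n : ℕ => ∑' k, T a b (c + n) k) Filter.atTop (nhds 1) := by
  set A : ℝ := max (max (‖a‖) (‖b‖)) 1 with hAdef
  have hA1 : (1:ℝ) ≤ A := le_max_right _ _
  set B : ℝ := A^2 with hBdef
  have hB1 : (1:ℝ) ≤ B := by nlinarith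
  have ha : ‖a‖ ≤ A := le_trans (le_max_left _ _) (le_max_left _ _)
  have hb : ‖b‖ ≤ A := le_trans (le_max_right _ _) (le_max_left _ _)
  have hsq : Summable (fun k : ℕ => B*(B+1) / (((k:ℝ)+1)*((k:ℝ)+1))) := by
    have h1 := Real.summable_one_div_nat_pow.2 (by norm_num : 1 < 2)
    have h2 := (summable_nat_add_iff 1).2 h1
    apply (h2.mul_left (B*(B+1))).congr
    intro k
    push_cast
    field_simp
  set E0 : ℝ := ∑' k : ℕ, B*(B+1) / (((k:ℝ)+1)*((k:ℝ)+1)) with hE0def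
  have hE0 : 0 ≤ E0 := tsum_nonneg fun k => by positivity
  rw [tendsto_iff_norm_sub_tendsto_zero]
  have hmaj : Filter.Tendsto (fun n : ℕ => (B+2) * E0 / (c.re + n)) Filter.atTop (nhds 0) := by
    apply Filter.Tendsto.div_atTop tendsto_const_nhds
    have := Filter.tendsto_atTop_add_const_left (Filter.atTop : Filter ℕ) c.re
      (tendsto_natCast_atTop_atTop (R := ℝ))
    exact this
  apply squeeze_zero' (Filter.Eventually.of_forall fun n => norm_nonneg _) _ hmaj
  have hcn : Filter.Tendsto (fun n : ℕ => c.re + (n:ℝ)) Filter.atTop Filter.atTop :=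
    Filter.tendsto_atTop_add_const_left _ c.re (tendsto_natCast_atTop_atTop (R := ℝ))
  filter_upwards [hcn.eventually_ge_atTop (B+2), hcn.eventually_gt_atTop 0] with n hn hnpos
  -- hypotheses for c + n
  have hc' := hc_shift hc n
  have h' : 0 < ((c + n) - a - b).re := h_shift h n
  have hcre' : 0 < (c + (n:ℂ)).re := by
    simpa [Complex.add_re, Complex.natCast_re] using hnpos
  have hcrev : (c + (n:ℂ)).re = c.re + (n:ℝ) := by
    simp [Complex.add_re, Complex.natCast_re]
  have hsumn : Summable (T a b (c + n)) := T_summable a b (c+n) hc' h'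
  have hsplit : ∑' k, T a b (c + (n:ℂ)) k = 1 + ∑' k, T a b (c + n) (k+1) := by
    rw [Summable.tsum_eq_zero_add hsumn, T_zero]
  have htail_norm_summable : Summable (fun k : ℕ => ‖T a b (c + (n:ℂ)) (k+1)‖) := by
    rw [summable_norm_iff]
    exact (summable_nat_add_iff 1).2 hsumn
  have hbound : ∀ k : ℕ, ‖T a b (c + (n:ℂ)) (k+1)‖
      ≤ (B+2)/(c.re + n) * (B*(B+1)/(((k:ℝ)+1)*((k:ℝ)+1))) := by
    intro k
    have := T_abs_bound a b hc' hcre' hA1 hBdef ha hb (k+1) (Nat.le_add_left 1 k)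
      (by rw [hcrev]; exact hn)
    rw [hcrev] at this
    convert this using 3 <;> push_cast <;> ring
  calc ‖(∑' k, T a b (c + (n:ℂ)) k) - 1‖ = ‖∑' k, T a b (c + (n:ℂ)) (k+1)‖ := by
        rw [hsplit]; congr 1; ring
    _ ≤ ∑' k, ‖T a b (c + (n:ℂ)) (k+1)‖ := norm_tsum_le_tsum_norm htail_norm_summable
    _ ≤ ∑' k : ℕ, (B+2)/(c.re + n) * (B*(B+1)/(((k:ℝ)+1)*((k:ℝ)+1))) := by
        apply Summable.tsum_le_tsum hbound htail_norm_summable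
        exact hsq.mul_left _
    _ = (B+2) * E0 / (c.re + n) := by
        rw [tsum_mul_left, hE0def]
        ring

lemma cpoch_gamma_limit (z : ℂ) :
    Filter.Tendsto (fun n : ℕ => cpoch z (n+1) * (n:ℂ)^(-z) / (n.factorial : ℂ))
      Filter.atTop (nhds (Complex.Gamma z)⁻¹) := by
  by_cases hz : ∃ m : ℕ, z = -(m:ℂ)
  · obtain ⟨m, rfl⟩ := hz
    rw [Complex.Gamma_neg_nat_eq_zero, inv_zero]
    apply Filter.Tendsto.congr' _ tendsto_const_nhds
    filter_upwards [Filter.eventually_ge_atTop m] with n hn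
    have hmem : m ∈ Finset.range (n+1) := Finset.mem_range.2 (by omega)
    have : cpoch (-(m:ℂ)) (n+1) = 0 :=
      Finset.prod_eq_zero hmem (by simp)
    rw [this, zero_mul, zero_div]
  · push_neg at hz
    have hΓ : Complex.Gamma z ≠ 0 := Complex.Gamma_ne_zero hz
    have hP : ∀ n : ℕ, cpoch z (n+1) ≠ 0 := by
      intro n
      refine Finset.prod_ne_zero_iff.2 fun i _ => ?_
      intro he
      exact hz i (by linear_combination he)
    have := (Complex.GammaSeq_tendsto_Gamma z).inv₀ hΓ
    apply Filter.Tendsto.congr' _ this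
    filter_upwards [Filter.eventually_ge_atTop 1] with n hn
    have hn0 : ((n:ℂ)) ≠ 0 := Nat.cast_ne_zero.2 (by omega)
    have hnz : ((n:ℂ))^z ≠ 0 := by
      intro he
      exact hn0 (Complex.cpow_eq_zero_iff _ _ |>.1 he).1
    have hfact : ((n.factorial : ℂ)) ≠ 0 := Nat.cast_ne_zero.2 n.factorial_ne_zero
    have hGdef : Complex.GammaSeq z n = (n:ℂ)^z * n.factorial / cpoch z (n+1) := rfl
    rw [hGdef, Complex.cpow_neg]
    field_simp

/-- Gauss's summation theorem: if `c` is not a nonpositive integer and `Re(c−a−b) > 0`,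
then the series `₂F₁(a,b;c;1) = Σ_k (a)_k (b)_k/((c)_k k!)` converges and equals
`Γ(c)Γ(c−a−b)/(Γ(c−a)Γ(c−b))`. -/
theorem gauss_summation (a b c : ℂ) (hc : ∀ m : ℤ, m ≤ 0 → c ≠ (m : ℂ))
    (h : 0 < (c - a - b).re) :
    Summable (fun k : ℕ => cpoch a k * cpoch b k / (cpoch c k * (k.factorial : ℂ))) ∧
      ∑' k : ℕ, cpoch a k * cpoch b k / (cpoch c k * (k.factorial : ℂ)) =
        Complex.Gamma c * Complex.Gamma (c - a - b) /
          (Complex.Gamma (c - a) * Complex.Gamma (c - b)) := by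
  have hsum : Summable (T a b c) := T_summable a b c hc h
  refine ⟨hsum, ?_⟩
  set S : ℂ := ∑' k, T a b c k with hSdef
  show S = _
  have hΓc : Complex.Gamma c ≠ 0 := by
    apply Complex.Gamma_ne_zero
    intro m he
    exact hc (-(m:ℤ)) (by omega) (by push_cast; linear_combination he)
  have hΓcab : Complex.Gamma (c - a - b) ≠ 0 := by
    apply Complex.Gamma_ne_zero
    intro m he
    have : (c - a - b).re = -(m:ℝ) := by rw [he]; simp
    have hm : (0:ℝ) ≤ (m:ℝ) := Nat.cast_nonneg m
    linarith [h, this.symm ▸ h]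
  -- limits
  have hfc := cpoch_gamma_limit c
  have hfcab := cpoch_gamma_limit (c - a - b)
  have hfca := cpoch_gamma_limit (c - a)
  have hfcb := cpoch_gamma_limit (c - b)
  have hG1 : Filter.Tendsto (fun n : ℕ => ∑' k, T a b (c + ((n+1:ℕ):ℂ)) k)
      Filter.atTop (nhds 1) :=
    (G_tendsto_one a b c hc h).comp (Filter.tendsto_add_atTop_nat 1)
  have hu : Filter.Tendsto (fun n : ℕ =>
      S * (cpoch c (n+1) * (n:ℂ)^(-c) / (n.factorial : ℂ))
        * (cpoch (c-a-b) (n+1) * (n:ℂ)^(-(c-a-b)) / (n.factorial : ℂ)))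
      Filter.atTop (nhds (S * (Complex.Gamma c)⁻¹ * (Complex.Gamma (c-a-b))⁻¹)) :=
    (tendsto_const_nhds.mul hfc).mul hfcab
  have hv : Filter.Tendsto (fun n : ℕ =>
      (cpoch (c-a) (n+1) * (n:ℂ)^(-(c-a)) / (n.factorial : ℂ))
        * (cpoch (c-b) (n+1) * (n:ℂ)^(-(c-b)) / (n.factorial : ℂ))
        * ∑' k, T a b (c + ((n+1:ℕ):ℂ)) k)
      Filter.atTop
      (nhds ((Complex.Gamma (c-a))⁻¹ * (Complex.Gamma (c-b))⁻¹ * 1)) :=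
    (hfca.mul hfcb).mul hG1
  have heq : ∀ᶠ n : ℕ in Filter.atTop,
      S * (cpoch c (n+1) * (n:ℂ)^(-c) / (n.factorial : ℂ))
        * (cpoch (c-a-b) (n+1) * (n:ℂ)^(-(c-a-b)) / (n.factorial : ℂ))
      = (cpoch (c-a) (n+1) * (n:ℂ)^(-(c-a)) / (n.factorial : ℂ))
        * (cpoch (c-b) (n+1) * (n:ℂ)^(-(c-b)) / (n.factorial : ℂ))
        * ∑' k, T a b (c + ((n+1:ℕ):ℂ)) k := by
    filter_upwards [Filter.eventually_ge_atTop 1] with n hn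
    have hn0 : ((n:ℂ)) ≠ 0 := Nat.cast_ne_zero.2 (by omega)
    have key := iterate_eq a b c hc h (n+1)
    have hpow : (n:ℂ)^(-(c-a)) * (n:ℂ)^(-(c-b)) = (n:ℂ)^(-c) * (n:ℂ)^(-(c-a-b)) := by
      rw [← Complex.cpow_add _ _ hn0, ← Complex.cpow_add _ _ hn0]
      congr 1
      ring
    calc S * (cpoch c (n+1) * (n:ℂ)^(-c) / (n.factorial : ℂ))
          * (cpoch (c-a-b) (n+1) * (n:ℂ)^(-(c-a-b)) / (n.factorial : ℂ))
        = (cpoch c (n+1) * cpoch (c-a-b) (n+1) * S)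
            * ((n:ℂ)^(-c) * (n:ℂ)^(-(c-a-b))) / ((n.factorial : ℂ) * (n.factorial : ℂ)) := by
          ring
      _ = (cpoch (c-a) (n+1) * cpoch (c-b) (n+1) * ∑' k, T a b (c + ((n+1:ℕ):ℂ)) k)
            * ((n:ℂ)^(-(c-a)) * (n:ℂ)^(-(c-b))) / ((n.factorial : ℂ) * (n.factorial : ℂ)) := by
          rw [key, hpow]
      _ = (cpoch (c-a) (n+1) * (n:ℂ)^(-(c-a)) / (n.factorial : ℂ))
            * (cpoch (c-b) (n+1) * (n:ℂ)^(-(c-b)) / (n.factorial : ℂ))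
            * ∑' k, T a b (c + ((n+1:ℕ):ℂ)) k := by
          ring
  have hmain := tendsto_nhds_unique (hu.congr' heq) hv
  -- hmain : S * Γc⁻¹ * Γcab⁻¹ = Γca⁻¹ * Γcb⁻¹ * 1
  have hfinal : S = Complex.Gamma c * Complex.Gamma (c-a-b)
      * ((Complex.Gamma (c-a))⁻¹ * (Complex.Gamma (c-b))⁻¹) := by
    calc S = (S * (Complex.Gamma c)⁻¹ * (Complex.Gamma (c-a-b))⁻¹)
          * (Complex.Gamma c * Complex.Gamma (c-a-b)) := by
          field_simp
      _ = ((Complex.Gamma (c-a))⁻¹ * (Complex.Gamma (c-b))⁻¹ * 1)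
          * (Complex.Gamma c * Complex.Gamma (c-a-b)) := by rw [hmain]
      _ = Complex.Gamma c * Complex.Gamma (c-a-b)
          * ((Complex.Gamma (c-a))⁻¹ * (Complex.Gamma (c-b))⁻¹) := by ring
  rw [div_eq_mul_inv, mul_inv]
  exact hfinal
end

section
/- [Γ(1/4)·Γ(1/2)²/Γ(3/4)]·₃F₂(1/4, 1/2, 1/4; 3/4, 1; 1) = Γ(1/2)·Γ(1/8)·Γ(3/8) / (2·Γ(5/8)·Γ(7/8)); here ₃F₂(1/4,1/2,1/4;3/4,1;1) is the convergent series Σ_{k=0}^∞ (1/4)_k·(1/2)_k·(1/4)_k/((3/4)_k·(1)_k·k!). -/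
open Complex Finset

open MeasureTheory Set


noncomputable def rp (a : ℝ) (k : ℕ) : ℝ := ∏ i ∈ Finset.range k, (a + (i : ℝ))

lemma rp_zero (a : ℝ) : rp a 0 = 1 := by simp [rp]

lemma rp_succ (a : ℝ) (k : ℕ) : rp a (k+1) = rp a k * (a + k) := by
  simp [rp, Finset.prod_range_succ]

lemma rp_pos {a : ℝ} (ha : 0 < a) (k : ℕ) : 0 < rp a k := by
  induction k with
  | zero => simp [rp_zero]
  | succ n ih => rw [rp_succ]; positivity

lemma rp_one (k : ℕ) : rp 1 k = (k.factorial : ℝ) := by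
  induction k with
  | zero => simp [rp_zero]
  | succ n ih => rw [rp_succ, ih, Nat.factorial_succ]; push_cast; ring

lemma rp_le_of_le {a b : ℝ} (hb : 0 < a) (hab : a ≤ b) (k : ℕ) : rp a k ≤ rp b k := by
  induction k with
  | zero => simp [rp_zero]
  | succ n ih =>
    rw [rp_succ, rp_succ]
    have h1 : 0 < rp a n := rp_pos hb n
    have : (0:ℝ) < a + n := by positivity
    nlinarith [rp_pos hb n]

lemma Gamma_rp {a : ℝ} (ha : 0 < a) (k : ℕ) :
    Real.Gamma (a + k) = rp a k * Real.Gamma a := by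
  induction k with
  | zero => simp [rp_zero]
  | succ n ih =>
    have : a + (n+1 : ℕ) = (a + n) + 1 := by push_cast; ring
    rw [this, Real.Gamma_add_one (by positivity), ih, rp_succ]; ring

/-- The real Beta integral over `Ioo 0 1`. -/
noncomputable def Ibeta (p q : ℝ) : ℝ :=
  ∫ x in Ioo (0:ℝ) 1, x ^ (p-1) * (1-x) ^ (q-1)

lemma betaIntegrable {p q : ℝ} (hp : 0 < p) (hq : 0 < q) :
    IntegrableOn (fun x : ℝ => x ^ (p-1) * (1-x) ^ (q-1)) (Ioo (0:ℝ) 1) := by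
  have hC := (Complex.betaIntegral_convergent (u := (p:ℂ)) (v := (q:ℂ)) (by simpa using hp) (by simpa using hq))
  rw [intervalIntegrable_iff_integrableOn_Ioc_of_le zero_le_one] at hC
  have hre : IntegrableOn (fun x : ℝ => ((x:ℂ) ^ ((p:ℂ)-1) * (1-(x:ℂ)) ^ ((q:ℂ)-1)).re)
      (Ioc (0:ℝ) 1) := hC.re
  have : IntegrableOn (fun x : ℝ => x ^ (p-1) * (1-x) ^ (q-1)) (Ioc (0:ℝ) 1) := by
    refine hre.congr_fun ?_ measurableSet_Ioc
    intro x hx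
    have h0 : (0:ℝ) ≤ x := le_of_lt hx.1
    have h1 : (0:ℝ) ≤ 1 - x := by linarith [hx.2]
    have e1 : ((x:ℂ)) ^ ((p:ℂ)-1) = ((x ^ (p-1) : ℝ) : ℂ) := by
      rw [Complex.ofReal_cpow h0]; push_cast; ring_nf
    have e2 : ((1-(x:ℂ))) ^ ((q:ℂ)-1) = (((1-x) ^ (q-1) : ℝ) : ℂ) := by
      rw [Complex.ofReal_cpow h1]; push_cast; ring_nf
    simp [e1, e2, ← Complex.ofReal_mul]
  exact this.mono_set Ioo_subset_Ioc_self

lemma Ibeta_eq {p q : ℝ} (hp : 0 < p) (hq : 0 < q) :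
    Ibeta p q = Real.Gamma p * Real.Gamma q / Real.Gamma (p+q) := by
  have key : Complex.Gamma p * Complex.Gamma q
      = Complex.Gamma (p+q) * Complex.betaIntegral p q := by
    have := Complex.Gamma_mul_Gamma_eq_betaIntegral (s := (p:ℂ)) (t := (q:ℂ))
      (by simpa using hp) (by simpa using hq)
    simpa using this
  have hbeta : Complex.betaIntegral p q = ((Ibeta p q : ℝ) : ℂ) := by
    rw [Complex.betaIntegral]
    rw [intervalIntegral.integral_of_le zero_le_one]
    rw [show ((Ibeta p q : ℝ):ℂ) = ((∫ x in Ioc (0:ℝ) 1, x ^ (p-1) * (1-x) ^ (q-1) : ℝ) : ℂ) by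
      rw [Ibeta, ← MeasureTheory.integral_Ioc_eq_integral_Ioo]]
    rw [show (∫ x in Ioc (0:ℝ) 1, ((x:ℂ) ^ ((p:ℂ)-1) * (1-(x:ℂ)) ^ ((q:ℂ)-1)))
        = ∫ x in Ioc (0:ℝ) 1, ((x ^ (p-1) * (1-x) ^ (q-1) : ℝ) : ℂ) from ?_]
    · exact integral_ofReal
    · refine setIntegral_congr_fun measurableSet_Ioc (fun x hx => ?_)
      have h0 : (0:ℝ) ≤ x := le_of_lt hx.1
      have h1 : (0:ℝ) ≤ 1 - x := by linarith [hx.2]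
      have e1 : ((x:ℂ)) ^ ((p:ℂ)-1) = ((x ^ (p-1) : ℝ) : ℂ) := by
        rw [Complex.ofReal_cpow h0]; push_cast; ring_nf
      have e2 : ((1-(x:ℂ))) ^ ((q:ℂ)-1) = (((1-x) ^ (q-1) : ℝ) : ℂ) := by
        rw [Complex.ofReal_cpow h1]; push_cast; ring_nf
      simp [e1, e2, ← Complex.ofReal_mul]
  rw [hbeta] at key
  rw [Complex.Gamma_ofReal, Complex.Gamma_ofReal, show ((p:ℂ)+(q:ℂ)) = ((p+q : ℝ):ℂ) by push_cast; ring,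
    Complex.Gamma_ofReal] at key
  have : (Real.Gamma p * Real.Gamma q : ℝ) = (Real.Gamma (p+q) * Ibeta p q : ℝ) := by
    exact_mod_cast key
  have hg : Real.Gamma (p+q) ≠ 0 := (Real.Gamma_pos_of_pos (by linarith)).ne'
  field_simp at this ⊢
  linarith [this]


section
variable {p q r y : ℝ}

lemma wcont (p q r y : ℝ) (hy0 : 0 ≤ y) (hy1 : y < 1) :
    ContinuousOn (fun x : ℝ => x ^ (p-1) * (1-x) ^ (q-1) * (1-x*y) ^ r) (Ioo (0:ℝ) 1) := by
  have h1 : ContinuousOn (fun x : ℝ => x ^ (p-1)) (Ioo (0:ℝ) 1) :=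
    continuousOn_id.rpow_const (fun x hx => Or.inl (ne_of_gt hx.1))
  have h2 : ContinuousOn (fun x : ℝ => (1-x) ^ (q-1)) (Ioo (0:ℝ) 1) :=
    (continuousOn_const.sub continuousOn_id).rpow_const
      (fun x hx => Or.inl (by intro h; simp only [Pi.sub_apply, id_eq] at h; nlinarith [hx.2]))
  have h3 : ContinuousOn (fun x : ℝ => (1-x*y) ^ r) (Ioo (0:ℝ) 1) := by
    refine (continuousOn_const.sub (continuousOn_id.mul continuousOn_const)).rpow_const
      (fun x hx => Or.inl ?_)
    have : x*y < 1 := lt_of_le_of_lt (by nlinarith [hx.1.le, hx.2.le]) hy1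
    intro h; simp only [Pi.sub_apply, Pi.mul_apply, id_eq] at h; nlinarith
  exact (h1.mul h2).mul h3

lemma wintegrable (hp : 0 < p) (hq : 0 < q) (hr : r ≤ 0) (hy0 : 0 ≤ y) (hy1 : y < 1) :
    IntegrableOn (fun x : ℝ => x ^ (p-1) * (1-x) ^ (q-1) * (1-x*y) ^ r) (Ioo (0:ℝ) 1) := by
  have hbeta : IntegrableOn (fun x : ℝ => x ^ (p-1) * (1-x) ^ (q-1)) (Ioo (0:ℝ) 1) := by
    have hC := (Complex.betaIntegral_convergent (u := (p:ℂ)) (v := (q:ℂ))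
      (by simpa using hp) (by simpa using hq))
    rw [intervalIntegrable_iff_integrableOn_Ioc_of_le zero_le_one] at hC
    have hre : IntegrableOn (fun x : ℝ => ((x:ℂ) ^ ((p:ℂ)-1) * (1-(x:ℂ)) ^ ((q:ℂ)-1)).re)
        (Ioc (0:ℝ) 1) := hC.re
    have : IntegrableOn (fun x : ℝ => x ^ (p-1) * (1-x) ^ (q-1)) (Ioc (0:ℝ) 1) := by
      refine hre.congr_fun ?_ measurableSet_Ioc
      intro x hx
      have h0 : (0:ℝ) ≤ x := le_of_lt hx.1
      have h1 : (0:ℝ) ≤ 1 - x := by linarith [hx.2]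
      have e1 : ((x:ℂ)) ^ ((p:ℂ)-1) = ((x ^ (p-1) : ℝ) : ℂ) := by
        rw [Complex.ofReal_cpow h0]; push_cast; ring_nf
      have e2 : ((1-(x:ℂ))) ^ ((q:ℂ)-1) = (((1-x) ^ (q-1) : ℝ) : ℂ) := by
        rw [Complex.ofReal_cpow h1]; push_cast; ring_nf
      simp [e1, e2, ← Complex.ofReal_mul]
    exact this.mono_set Ioo_subset_Ioc_self
  refine Integrable.mono' (hbeta.const_mul ((1-y) ^ r)) ((wcont p q r y hy0 hy1).aestronglyMeasurable measurableSet_Ioo) ?_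
  refine (ae_restrict_iff' measurableSet_Ioo).mpr (Filter.Eventually.of_forall (fun x hx => ?_))
  have hx0 : (0:ℝ) < x := hx.1
  have hx1 : x < 1 := hx.2
  have hxy : 0 < 1 - x*y := by nlinarith
  have hDx : 0 < 1 - y := by linarith
  have hle : 1 - y ≤ 1 - x*y := by nlinarith
  have h3 : (1-x*y) ^ r ≤ (1-y) ^ r := Real.rpow_le_rpow_of_nonpos hDx hle hr
  have hxx : (0:ℝ) ≤ x := hx0.le
  have hxx1 : (0:ℝ) ≤ 1-x := by linarith
  have hnn : 0 ≤ x ^ (p-1) * (1-x) ^ (q-1) :=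
    mul_nonneg (Real.rpow_nonneg hxx _) (Real.rpow_nonneg hxx1 _)
  rw [Real.norm_eq_abs, _root_.abs_of_nonneg (mul_nonneg (mul_nonneg (Real.rpow_nonneg hxx _)
    (Real.rpow_nonneg hxx1 _)) (Real.rpow_nonneg hxy.le _))]
  calc x ^ (p-1) * (1-x) ^ (q-1) * (1-x*y) ^ r ≤ x ^ (p-1) * (1-x) ^ (q-1) * (1-y) ^ r := by
        exact mul_le_mul_of_nonneg_left h3 hnn
    _ = (1-y) ^ r * (x ^ (p-1) * (1-x) ^ (q-1)) := by ring

lemma sub_swap (hp : 0 < p) (hq : 0 < q) (hy0 : 0 ≤ y) (hy1 : y < 1) :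
    ∫ x in Ioo (0:ℝ) 1, x ^ (p-1) * (1-x) ^ (q-1) * (1-x*y) ^ r
      = (1-y) ^ (q+r) * ∫ u in Ioo (0:ℝ) 1, u ^ (q-1) * (1-u) ^ (p-1) * (1-u*y) ^ (-(p+q+r)) := by
  set φ : ℝ → ℝ := fun u => (1-u)/(1-u*y) with hφ
  have hden : ∀ u : ℝ, u ∈ Ioo (0:ℝ) 1 → 0 < 1 - u*y := by
    intro u hu; nlinarith [hu.1, hu.2]
  have hD : 0 < 1 - y := by linarith
  have hmem : ∀ u : ℝ, u ∈ Ioo (0:ℝ) 1 → φ u ∈ Ioo (0:ℝ) 1 := by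
    intro u hu
    have h1 := hden u hu
    constructor
    · exact div_pos (by linarith [hu.2]) h1
    · rw [div_lt_one h1]; nlinarith [hu.1, hu.2]
  have e2all : ∀ u : ℝ, u ∈ Ioo (0:ℝ) 1 → 1 - φ u = u*(1-y)/(1-u*y) := by
    intro u hu
    have h1 := hden u hu
    rw [hφ]; field_simp; ring
  have e3all : ∀ u : ℝ, u ∈ Ioo (0:ℝ) 1 → 1 - φ u * y = (1-y)/(1-u*y) := by
    intro u hu
    have h1 := hden u hu
    rw [hφ]; field_simp; ring
  have hinv : ∀ u : ℝ, u ∈ Ioo (0:ℝ) 1 → φ (φ u) = u := by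
    intro u hu
    have h1 := hden u hu
    have : φ (φ u) = (1 - φ u)/(1 - φ u * y) := rfl
    rw [this, e2all u hu, e3all u hu]
    field_simp
  have himg : φ '' (Ioo (0:ℝ) 1) = Ioo (0:ℝ) 1 := by
    apply Set.Subset.antisymm
    · rintro x ⟨u, hu, rfl⟩; exact hmem u hu
    · intro x hx; exact ⟨φ x, hmem x hx, hinv x hx⟩
  have hinj : InjOn φ (Ioo (0:ℝ) 1) := by
    intro u hu v hv h
    rw [← hinv u hu, ← hinv v hv, h]
  have hder : ∀ u ∈ Ioo (0:ℝ) 1,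
      HasDerivWithinAt φ ((y-1)/(1-u*y)^2) (Ioo (0:ℝ) 1) u := by
    intro u hu
    have h1 := hden u hu
    have : HasDerivAt φ ((y-1)/(1-u*y)^2) u := by
      have hnum : HasDerivAt (fun u : ℝ => 1-u) (-1) u := by
        simpa using (hasDerivAt_id u).const_sub 1
      have hden' : HasDerivAt (fun u : ℝ => 1-u*y) (-y) u := by
        simpa using ((hasDerivAt_id u).mul_const y).const_sub 1
      have := hnum.div hden' (ne_of_gt h1)
      rw [show (y-1)/(1-u*y)^2 = (-1 * (1 - u * y) - (1 - u) * -y) / (1 - u * y) ^ 2 by ring]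
      exact this
    exact this.hasDerivWithinAt
  have key := integral_image_eq_integral_abs_deriv_smul measurableSet_Ioo hder hinj
    (fun x => x ^ (p-1) * (1-x) ^ (q-1) * (1-x*y) ^ r)
  rw [himg] at key
  rw [key]
  rw [show (1-y)^(q+r) * (∫ u in Ioo (0:ℝ) 1, u ^ (q-1) * (1-u) ^ (p-1) * (1-u*y) ^ (-(p+q+r)))
      = ∫ u in Ioo (0:ℝ) 1, (1-y)^(q+r) • (u ^ (q-1) * (1-u) ^ (p-1) * (1-u*y) ^ (-(p+q+r))) from by
    rw [integral_smul]; simp [smul_eq_mul]]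
  refine setIntegral_congr_fun measurableSet_Ioo (fun u hu => ?_)
  have hu0 : (0:ℝ) < u := hu.1
  have hu1 : u < 1 := hu.2
  have hC : 0 < 1 - u*y := hden u hu
  have hB : 0 < 1 - u := by linarith
  have e1 : φ u = (1-u)/(1-u*y) := rfl
  have e2 : 1 - φ u = u*(1-y)/(1-u*y) := e2all u hu
  have e3 : 1 - φ u * y = (1-y)/(1-u*y) := e3all u hu
  have eabs : |(y-1)/(1-u*y)^2| = (1-y)/(1-u*y)^2 := by
    rw [_root_.abs_div, _root_.abs_of_nonpos (by linarith), _root_.abs_of_pos (by positivity)]; ring_nf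
  rw [smul_eq_mul, smul_eq_mul, eabs, e1, e2, e3]
  rw [Real.div_rpow hB.le hC.le, Real.div_rpow (by positivity) hC.le,
    Real.div_rpow hD.le hC.le, Real.mul_rpow hu0.le hD.le]
  field_simp
  have hCsq : ((1-u*y):ℝ)^(2:ℕ) = (1-u*y) ^ ((2:ℕ):ℝ) := (Real.rpow_natCast _ 2).symm
  have c1 : (1-u*y) ^ (-r + (-q + -p)) * ((1-u*y)^(2:ℕ) * ((1-u*y)^(p-1) * (1-u*y)^(q-1) * (1-u*y)^r)) = 1 := by
    rw [hCsq]
    simp only [← Real.rpow_add hC]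
    rw [show (-r + (-q + -p) + (((2:ℕ):ℝ) + (p-1 + (q-1) + r))) = 0 by push_cast; ring]
    exact Real.rpow_zero _
  have d1 : ((1-y):ℝ)^(q+r) = (1-y) * ((1-y)^(q-1) * (1-y)^r) := by
    rw [show (q+r:ℝ) = 1+(q-1)+r by ring, Real.rpow_add hD, Real.rpow_add hD, Real.rpow_one]
    ring
  rw [d1]
  have hC' : 0 < 1 - y*u := by rw [mul_comm]; exact hC
  have e4 : (1-y*u)^(-(p+q+r)) = ((1-y*u)^(2:ℕ) * (1-y*u)^(p-1) * (1-y*u)^(q-1) * (1-y*u)^r)⁻¹ := by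
    rw [Real.rpow_neg hC'.le, ← Real.rpow_natCast, ← Real.rpow_add hC', ← Real.rpow_add hC',
      ← Real.rpow_add hC', show ((2:ℕ):ℝ) + (p-1) + (q-1) + r = p+q+r by push_cast; ring]
  rw [e4, div_eq_mul_inv]
  ring

end

lemma Ibeta_pos {p q : ℝ} (hp : 0 < p) (hq : 0 < q) : 0 < Ibeta p q := by
  rw [Ibeta_eq hp hq]
  have := Real.Gamma_pos_of_pos hp
  have := Real.Gamma_pos_of_pos hq
  have := Real.Gamma_pos_of_pos (add_pos hp hq)
  positivity

lemma Ibeta_shift {b d : ℝ} (hb : 0 < b) (hd : 0 < d) (k : ℕ) :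
    Ibeta (b+k) d = rp b k / rp (b+d) k * Ibeta b d := by
  rw [Ibeta_eq (by positivity) hd, Ibeta_eq hb hd, Gamma_rp hb k,
    show (b+k+d : ℝ) = (b+d) + k by ring, Gamma_rp (by positivity) k]
  have g1 := (Real.Gamma_pos_of_pos (add_pos hb hd)).ne'
  have g2 := (rp_pos (add_pos hb hd) k).ne'
  field_simp

/-- Workhorse: swap a positive power series against a Beta-type integral. -/
lemma ser_int {c : ℕ → ℝ} (hc : ∀ k, 0 ≤ c k) (hc1 : ∀ k, c k ≤ 1) {b d : ℝ}
    (hb : 0 < b) (hd : 0 < d)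
    (hsum : Summable (fun k => c k * (rp b k / rp (b+d) k))) :
    ∫ t in Ioo (0:ℝ) 1, t ^ (b-1) * (1-t) ^ (d-1) * (∑' k, c k * t^k)
      = (∑' k, c k * (rp b k / rp (b+d) k)) * Ibeta b d := by
  set f : ℕ → ℝ → ℝ := fun k t => c k * (t ^ (b + k - 1) * (1-t) ^ (d-1)) with hf
  have hint : ∀ k, IntegrableOn (f k) (Ioo (0:ℝ) 1) := by
    intro k
    exact (betaIntegrable (by positivity : (0:ℝ) < b + k) hd).const_mul _
  have hval : ∀ k, ∫ t in Ioo (0:ℝ) 1, f k t = c k * (rp b k / rp (b+d) k) * Ibeta b d := by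
    intro k
    rw [hf]
    simp only
    rw [integral_const_mul, ← Ibeta, Ibeta_shift hb hd k]
    ring
  have hnorm : ∀ k, ∫ t in Ioo (0:ℝ) 1, ‖f k t‖ = ∫ t in Ioo (0:ℝ) 1, f k t := by
    intro k
    refine setIntegral_congr_fun measurableSet_Ioo (fun t ht => ?_)
    rw [Real.norm_eq_abs, _root_.abs_of_nonneg]
    exact mul_nonneg (hc k) (mul_nonneg (Real.rpow_nonneg ht.1.le _)
      (Real.rpow_nonneg (by linarith [ht.2] : (0:ℝ) ≤ 1 - t) _))
  have hsum2 : Summable fun k => ∫ t in Ioo (0:ℝ) 1, ‖f k t‖ := by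
    refine Summable.congr (hsum.mul_right (Ibeta b d)) (fun k => ?_)
    rw [hnorm k, hval k]
  have key := integral_tsum_of_summable_integral_norm (μ := volume.restrict (Ioo (0:ℝ) 1))
    (F := f) hint hsum2
  have e1 : ∑' k, ∫ t in Ioo (0:ℝ) 1, f k t = (∑' k, c k * (rp b k / rp (b+d) k)) * Ibeta b d := by
    rw [← tsum_mul_right]
    exact tsum_congr hval
  rw [e1] at key
  rw [key]
  refine setIntegral_congr_fun measurableSet_Ioo (fun t ht => ?_)
  have ht0 : (0:ℝ) < t := ht.1
  have ht1 : t < 1 := ht.2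
  have hrw : ∀ k : ℕ, f k t = (t ^ (b-1) * (1-t) ^ (d-1)) * (c k * t^k) := by
    intro k
    rw [hf]
    simp only
    rw [show (b + k - 1 : ℝ) = (b-1) + k by ring, Real.rpow_add ht0, Real.rpow_natCast]
    ring
  rw [show (∑' k, f k t) = ∑' k, (t ^ (b-1) * (1-t) ^ (d-1)) * (c k * t^k) from tsum_congr hrw,
    tsum_mul_left]

lemma Ibeta_symm {p q : ℝ} (hp : 0 < p) (hq : 0 < q) : Ibeta p q = Ibeta q p := by
  rw [Ibeta_eq hp hq, Ibeta_eq hq hp, add_comm]; ring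

lemma summable_bin_terms {a x : ℝ} (ha0 : 0 < a) (ha1 : a ≤ 1) (hx0 : 0 ≤ x) (hx1 : x < 1) :
    Summable (fun k : ℕ => rp a k / k.factorial * x^k) := by
  refine Summable.of_nonneg_of_le (fun k => ?_) (fun k => ?_) (summable_geometric_of_lt_one hx0 hx1)
  · have := rp_pos ha0 k
    have := Nat.factorial_pos k
    positivity
  · have h1 : rp a k ≤ (k.factorial : ℝ) := by
      rw [← rp_one k]; exact rp_le_of_le ha0 ha1 k
    have h2 : rp a k / k.factorial ≤ 1 := by
      rw [div_le_one (by exact_mod_cast Nat.factorial_pos k)]; exact h1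
    calc rp a k / k.factorial * x^k ≤ 1 * x^k := by
          refine mul_le_mul_of_nonneg_right h2 (by positivity)
      _ = x^k := one_mul _
lemma bin {a x : ℝ} (ha0 : 0 < a) (ha1 : a < 1) (hx0 : 0 ≤ x) (hx1 : x < 1) :
    HasSum (fun k : ℕ => rp a k / k.factorial * x^k) ((1-x) ^ (-a)) := by
  have hsummable := summable_bin_terms ha0 ha1.le hx0 hx1
  rw [Summable.hasSum_iff hsummable]
  have h1a : (0:ℝ) < 1 - a := by linarith
  have hone : a + (1-a) = 1 := by ring
  have hsum : Summable (fun k : ℕ => x^k * (rp a k / rp (a+(1-a)) k)) := by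
    refine hsummable.congr (fun k => ?_)
    rw [hone, rp_one]; ring
  have hser := ser_int (c := fun k => x^k) (fun k => by positivity)
    (fun k => pow_le_one₀ hx0 hx1.le) ha0 h1a hsum
  have hgeo : ∀ t : ℝ, t ∈ Ioo (0:ℝ) 1 → (∑' k : ℕ, x^k * t^k) = (1 - t*x) ^ ((-1 : ℝ)) := by
    intro t ht
    have htx0 : 0 ≤ t*x := mul_nonneg ht.1.le hx0
    have htx1 : t*x < 1 := by nlinarith [ht.1, ht.2]
    rw [Real.rpow_neg_one]
    rw [show (∑' k : ℕ, x^k * t^k) = ∑' k : ℕ, (t*x)^k from tsum_congr (fun k => by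
      rw [mul_pow]; ring), tsum_geometric_of_lt_one htx0 htx1]
  have hLHS : ∫ t in Ioo (0:ℝ) 1, t ^ (a-1) * (1-t) ^ ((1-a)-1) * (∑' k : ℕ, x^k * t^k)
      = ∫ t in Ioo (0:ℝ) 1, t ^ (a-1) * (1-t) ^ ((1-a)-1) * (1-t*x) ^ ((-1:ℝ)) := by
    refine setIntegral_congr_fun measurableSet_Ioo (fun t ht => ?_)
    rw [hgeo t ht]
  have hswap := sub_swap (p := a) (q := 1-a) (r := -1) (y := x) ha0 h1a hx0 hx1
  have hzero : -(a + (1-a) + (-1)) = (0:ℝ) := by ring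
  have hval : ∫ u in Ioo (0:ℝ) 1, u ^ ((1-a)-1) * (1-u) ^ (a-1) * (1-u*x) ^ (-(a+(1-a)+(-1)))
      = Ibeta (1-a) a := by
    rw [Ibeta]
    refine setIntegral_congr_fun measurableSet_Ioo (fun u hu => ?_)
    rw [hzero, Real.rpow_zero, mul_one]
  rw [hLHS, hswap, hval] at hser
  simp only [hone, rp_one] at hser
  have heq : (∑' k : ℕ, x ^ k * (rp a k / (k.factorial:ℝ))) = ∑' k : ℕ, rp a k / k.factorial * x^k :=
    tsum_congr fun k => by ring
  rw [heq, Ibeta_symm h1a ha0, show ((1-a)+(-1):ℝ) = -a by ring] at hser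
  exact (mul_right_cancel₀ (Ibeta_pos ha0 h1a).ne' hser).symm

-- ### summability bounds
lemma le_of_sq {u v : ℝ} (hu : 0 ≤ u) (hv : 0 ≤ v) (h : u^2 ≤ v^2) : u ≤ v := by nlinarith
lemma le_of_pow4 {u v : ℝ} (hu : 0 ≤ u) (hv : 0 ≤ v) (h : u^4 ≤ v^4) : u ≤ v := by
  have h2 : u^2 ≤ v^2 := le_of_sq (sq_nonneg u) (sq_nonneg v) (by nlinarith)
  exact le_of_sq hu hv h2

lemma q_quarter (n : ℕ) : (rp (1/4) n / n.factorial)^4 * ((n:ℝ)+1)^3 ≤ 1 := by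
  induction n with
  | zero => norm_num [rp_zero]
  | succ m ih =>
    have hf : (0:ℝ) < m.factorial := by exact_mod_cast m.factorial_pos
    have hr := rp_pos (by norm_num : (0:ℝ) < 1/4) m
    have hm : (0:ℝ) ≤ m := m.cast_nonneg
    rw [rp_succ, Nat.factorial_succ]
    push_cast
    have key : ((m:ℝ)+1/4)^4 * ((m:ℝ)+2)^3 ≤ (((m:ℝ)+1)^4 * ((m:ℝ)+1)^3) := by
      nlinarith [hm, pow_nonneg hm 2, pow_nonneg hm 3, pow_nonneg hm 4, pow_nonneg hm 5]
    have expand : (rp (1/4) m * (1/4 + m) / ((m+1) * m.factorial))^4 * ((m:ℝ)+1+1)^3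
        = ((rp (1/4) m / m.factorial)^4 * ((m:ℝ)+1)^3) * (((m:ℝ)+1/4)^4 * ((m:ℝ)+2)^3 / (((m:ℝ)+1)^4 * ((m:ℝ)+1)^3)) := by
      field_simp
      ring
    rw [expand]
    have h2 : ((m:ℝ)+1/4)^4 * ((m:ℝ)+2)^3 / (((m:ℝ)+1)^4 * ((m:ℝ)+1)^3) ≤ 1 := by
      rw [div_le_one (by positivity)]; exact key
    have h1 : (0:ℝ) ≤ (rp (1/4) m / m.factorial)^4 * ((m:ℝ)+1)^3 := by positivity
    calc ((rp (1/4) m / m.factorial)^4 * ((m:ℝ)+1)^3) * (((m:ℝ)+1/4)^4 * ((m:ℝ)+2)^3 / (((m:ℝ)+1)^4 * ((m:ℝ)+1)^3))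
        ≤ 1 * 1 := mul_le_mul ih h2 (by positivity) (by norm_num)
      _ = 1 := by norm_num

lemma q_half (n : ℕ) : (rp (1/2) n / n.factorial)^2 * ((n:ℝ)+1) ≤ 1 := by
  induction n with
  | zero => norm_num [rp_zero]
  | succ m ih =>
    have hf : (0:ℝ) < m.factorial := by exact_mod_cast m.factorial_pos
    have hr := rp_pos (by norm_num : (0:ℝ) < 1/2) m
    have hm : (0:ℝ) ≤ m := m.cast_nonneg
    rw [rp_succ, Nat.factorial_succ]
    push_cast
    have key : ((m:ℝ)+1/2)^2 * ((m:ℝ)+2) ≤ (((m:ℝ)+1)^2 * ((m:ℝ)+1)) := by nlinarith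
    have expand : (rp (1/2) m * (1/2 + m) / ((m+1) * m.factorial))^2 * ((m:ℝ)+1+1)
        = ((rp (1/2) m / m.factorial)^2 * ((m:ℝ)+1)) * (((m:ℝ)+1/2)^2 * ((m:ℝ)+2) / (((m:ℝ)+1)^2 * ((m:ℝ)+1))) := by
      field_simp
      ring
    rw [expand]
    have h2 : ((m:ℝ)+1/2)^2 * ((m:ℝ)+2) / (((m:ℝ)+1)^2 * ((m:ℝ)+1)) ≤ 1 := by
      rw [div_le_one (by positivity)]; exact key
    calc ((rp (1/2) m / m.factorial)^2 * ((m:ℝ)+1)) * (((m:ℝ)+1/2)^2 * ((m:ℝ)+2) / (((m:ℝ)+1)^2 * ((m:ℝ)+1)))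
        ≤ 1 * 1 := mul_le_mul ih h2 (by positivity) (by norm_num)
      _ = 1 := by norm_num

-- termwise product comparisons
lemma rp_mul_le {α β γ : ℝ} (h0 : 0 < α) (h0' : 0 < β) (h : ∀ i : ℕ, (α+i)*(β+i) ≤ (γ+i)^2) (n : ℕ) :
    rp α n * rp β n ≤ rp γ n ^ 2 := by
  induction n with
  | zero => simp [rp_zero]
  | succ m ih =>
    rw [rp_succ, rp_succ, rp_succ]
    have h1 := rp_pos h0 m
    have h2 := rp_pos h0' m
    have hγ : 0 < rp γ m ^ 2 := lt_of_lt_of_le (by nlinarith) ih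
    have hαi : (0:ℝ) < α + m := by positivity
    have hβi : (0:ℝ) < β + m := by positivity
    have hi := h m
    calc rp α m * (α+m) * (rp β m * (β+m)) = (rp α m * rp β m) * ((α+m)*(β+m)) := by ring
      _ ≤ rp γ m ^2 * ((γ+m)^2) := by
        refine mul_le_mul ih hi (by positivity) (by positivity)
      _ = (rp γ m * (γ+m))^2 := by ring

noncomputable def aa (k : ℕ) : ℝ := rp (1/8) k * rp (3/8) k / ((k.factorial:ℝ) * k.factorial)
noncomputable def tt (n : ℕ) : ℝ :=
  rp (1/4) n * rp (1/2) n * rp (3/4) n / ((n.factorial:ℝ) * n.factorial * n.factorial)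
noncomputable def TT (n : ℕ) : ℝ :=
  rp (1/4) n * rp (1/2) n * rp (1/4) n / (rp (3/4) n * (n.factorial:ℝ) * n.factorial)

lemma fact_pos' (n : ℕ) : (0:ℝ) < n.factorial := by exact_mod_cast n.factorial_pos

lemma aa_pos (k : ℕ) : 0 < aa k := by
  have := rp_pos (by norm_num : (0:ℝ) < 1/8) k
  have := rp_pos (by norm_num : (0:ℝ) < 3/8) k
  have := fact_pos' k
  rw [aa]; positivity

lemma tt_pos (n : ℕ) : 0 < tt n := by
  have := rp_pos (by norm_num : (0:ℝ) < 1/4) n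
  have := rp_pos (by norm_num : (0:ℝ) < 1/2) n
  have := rp_pos (by norm_num : (0:ℝ) < 3/4) n
  have := fact_pos' n
  rw [tt]; positivity

lemma TT_pos (n : ℕ) : 0 < TT n := by
  have := rp_pos (by norm_num : (0:ℝ) < 1/4) n
  have := rp_pos (by norm_num : (0:ℝ) < 1/2) n
  have := rp_pos (by norm_num : (0:ℝ) < 3/4) n
  have := fact_pos' n
  rw [TT]; positivity

lemma rpow_sq (x : ℝ) (hx : 0 ≤ x) (e : ℝ) : (x^e)^(2:ℕ) = x^(e*2) := by
  rw [← Real.rpow_natCast (x^e) 2, ← Real.rpow_mul hx]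
  norm_num
lemma rpow_p4 (x : ℝ) (hx : 0 ≤ x) (e : ℝ) : (x^e)^(4:ℕ) = x^(e*4) := by
  rw [← Real.rpow_natCast (x^e) 4, ← Real.rpow_mul hx]
  norm_num
lemma rpow_neg_nat (x : ℝ) (hx : 0 < x) (n : ℕ) : x^(-(n:ℝ)) = (x^n)⁻¹ := by
  rw [Real.rpow_neg hx.le, Real.rpow_natCast]

lemma div_le_inv {X Y Z : ℝ} (hY : 0 < Y) (hZ : 0 < Z) (h : X * Z ≤ Y) : X / Y ≤ Z⁻¹ := by
  rw [div_le_iff₀ hY, inv_mul_eq_div, le_div_iff₀ hZ]; exact h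

lemma q_quarter' (k : ℕ) : rp (1/4) k^4 * ((k:ℝ)+1)^3 ≤ ((k.factorial:ℝ))^4 := by
  have hq := q_quarter k
  have hF := fact_pos' k
  rw [div_pow, div_mul_eq_mul_div, div_le_one (by positivity)] at hq
  exact hq

lemma q_half' (k : ℕ) : rp (1/2) k^2 * ((k:ℝ)+1) ≤ ((k.factorial:ℝ))^2 := by
  have hq := q_half k
  have hF := fact_pos' k
  rw [div_pow, div_mul_eq_mul_div, div_le_one (by positivity)] at hq
  exact hq

lemma aa_le (k : ℕ) : aa k ≤ ((k:ℝ)+1) ^ (-(3/2) : ℝ) := by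
  have hN : (0:ℝ) < (k:ℝ)+1 := by positivity
  have hF := fact_pos' k
  have h4 : rp (1/8) k * rp (3/8) k ≤ rp (1/4) k^2 :=
    rp_mul_le (γ := 1/4) (by norm_num) (by norm_num) (fun i => by nlinarith [i.cast_nonneg (α := ℝ)]) k
  have hA := rp_pos (by norm_num : (0:ℝ) < 1/4) k
  have h18 := rp_pos (by norm_num : (0:ℝ) < 1/8) k
  have h38 := rp_pos (by norm_num : (0:ℝ) < 3/8) k
  refine le_of_sq (aa_pos k).le (Real.rpow_nonneg hN.le _) ?_
  have e1 : (((k:ℝ)+1) ^ (-(3/2) : ℝ))^(2:ℕ) = (((k:ℝ)+1)^(3:ℕ))⁻¹ := by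
    rw [rpow_sq _ hN.le, show (-(3/2) * 2 : ℝ) = -((3:ℕ):ℝ) by norm_num, rpow_neg_nat _ hN]
  rw [e1]
  have h5 : (aa k)^2 ≤ rp (1/4) k^4 / ((k.factorial:ℝ))^4 := by
    rw [aa, div_pow]
    refine div_le_div₀ (by positivity) ?_ (by positivity) (by rw [mul_pow]; nlinarith)
    nlinarith [mul_pos h18 h38]
  refine h5.trans (div_le_inv (by positivity) (by positivity) ?_)
  have := q_quarter' k
  nlinarith

lemma tt_le (n : ℕ) : tt n ≤ ((n:ℝ)+1) ^ (-(3/2) : ℝ) := by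
  have hN : (0:ℝ) < (n:ℝ)+1 := by positivity
  have hF := fact_pos' n
  have hA := rp_pos (by norm_num : (0:ℝ) < 1/4) n
  have hB := rp_pos (by norm_num : (0:ℝ) < 1/2) n
  have hC := rp_pos (by norm_num : (0:ℝ) < 3/4) n
  have h4 : rp (1/4) n * rp (3/4) n ≤ rp (1/2) n^2 :=
    rp_mul_le (γ := 1/2) (by norm_num) (by norm_num) (fun i => by nlinarith [i.cast_nonneg (α := ℝ)]) n
  refine le_of_sq (tt_pos n).le (Real.rpow_nonneg hN.le _) ?_
  have e1 : (((n:ℝ)+1) ^ (-(3/2) : ℝ))^(2:ℕ) = (((n:ℝ)+1)^(3:ℕ))⁻¹ := by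
    rw [rpow_sq _ hN.le, show (-(3/2) * 2 : ℝ) = -((3:ℕ):ℝ) by norm_num, rpow_neg_nat _ hN]
  rw [e1]
  have s1 : (rp (1/4) n * rp (3/4) n)^2 ≤ (rp (1/2) n^2)^2 := pow_le_pow_left₀ (by positivity) h4 2
  have h5 : (tt n)^2 ≤ rp (1/2) n^6 / ((n.factorial:ℝ))^6 := by
    rw [tt, div_pow]
    refine div_le_div₀ (by positivity) ?_ (by positivity) (by nlinarith)
    calc (rp (1/4) n * rp (1/2) n * rp (3/4) n)^2
        = (rp (1/4) n * rp (3/4) n)^2 * rp (1/2) n^2 := by ring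
      _ ≤ (rp (1/2) n^2)^2 * rp (1/2) n^2 := mul_le_mul_of_nonneg_right s1 (by positivity)
      _ = rp (1/2) n^6 := by ring
  refine h5.trans (div_le_inv (by positivity) (by positivity) ?_)
  have hq := q_half' n
  have s2 : (rp (1/2) n^2 * ((n:ℝ)+1))^3 ≤ (((n.factorial:ℝ))^2)^3 := pow_le_pow_left₀ (by positivity) hq 3
  calc rp (1/2) n^6 * ((n:ℝ)+1)^3 = (rp (1/2) n^2 * ((n:ℝ)+1))^3 := by ring
    _ ≤ (((n.factorial:ℝ))^2)^3 := s2
    _ = ((n.factorial:ℝ))^6 := by ring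

lemma TT_le (n : ℕ) : TT n ≤ ((n:ℝ)+1) ^ (-(7/4) : ℝ) := by
  have hN : (0:ℝ) < (n:ℝ)+1 := by positivity
  have hF := fact_pos' n
  have hA := rp_pos (by norm_num : (0:ℝ) < 1/4) n
  have hB := rp_pos (by norm_num : (0:ℝ) < 1/2) n
  have hC := rp_pos (by norm_num : (0:ℝ) < 3/4) n
  have h6 : rp (1/2) n * (n.factorial:ℝ) ≤ rp (3/4) n^2 := by
    have := rp_mul_le (γ := 3/4) (by norm_num : (0:ℝ) < 1/2) (by norm_num : (0:ℝ) < 1)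
      (fun i => by nlinarith [i.cast_nonneg (α := ℝ)]) n
    rwa [rp_one] at this
  refine le_of_pow4 (TT_pos n).le (Real.rpow_nonneg hN.le _) ?_
  have e1 : (((n:ℝ)+1) ^ (-(7/4) : ℝ))^(4:ℕ) = (((n:ℝ)+1)^(7:ℕ))⁻¹ := by
    rw [rpow_p4 _ hN.le, show (-(7/4) * 4 : ℝ) = -((7:ℕ):ℝ) by norm_num, rpow_neg_nat _ hN]
  rw [e1]
  have hq4 := q_quarter' n
  have hq2 := q_half' n
  set A := rp (1/4) n
  set B := rp (1/2) n
  set C := rp (3/4) n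
  set F := ((n.factorial:ℝ))
  set N := ((n:ℝ)+1)
  have k1 : A^8 * N^6 ≤ F^8 := by
    have := pow_le_pow_left₀ (by positivity) hq4 2
    calc A^8 * N^6 = (A^4*N^3)^2 := by ring
      _ ≤ (F^4)^2 := this
      _ = F^8 := by ring
  have k2 : A^8 * B^2 * N^7 ≤ F^10 := by
    have := mul_le_mul k1 hq2 (by positivity) (by positivity)
    calc A^8 * B^2 * N^7 = (A^8*N^6) * (B^2*N) := by ring
      _ ≤ F^8 * F^2 := this
      _ = F^10 := by ring
  have k3 : B^2 * F^2 ≤ C^4 := by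
    have := pow_le_pow_left₀ (by positivity) h6 2
    calc B^2*F^2 = (B*F)^2 := by ring
      _ ≤ (C^2)^2 := this
      _ = C^4 := by ring
  have key : A^8 * B^4 * N^7 ≤ C^4 * F^8 := by
    calc A^8 * B^4 * N^7 = (A^8 * B^2 * N^7) * B^2 := by ring
      _ ≤ F^10 * B^2 := mul_le_mul_of_nonneg_right k2 (by positivity)
      _ = (B^2 * F^2) * F^8 := by ring
      _ ≤ C^4 * F^8 := mul_le_mul_of_nonneg_right k3 (by positivity)
  have h5 : (TT n)^4 = A^8 * B^4 / (C^4 * F^8) := by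
    rw [TT, div_pow]; ring_nf; rfl
  rw [h5]
  exact div_le_inv (by positivity) (by positivity) key

lemma summable_shift_rpow {p : ℝ} (hp : 1 < p) : Summable (fun k : ℕ => ((k:ℝ)+1)^(-p)) := by
  have h := Real.summable_nat_rpow_inv.mpr hp
  have h2 := (summable_nat_add_iff 1).mpr h
  refine h2.congr (fun n => ?_)
  push_cast
  rw [← Real.rpow_neg (by positivity)]

lemma summable_aa : Summable aa :=
  Summable.of_nonneg_of_le (fun k => (aa_pos k).le) aa_le (summable_shift_rpow (by norm_num))
lemma summable_tt : Summable tt :=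
  Summable.of_nonneg_of_le (fun k => (tt_pos k).le) tt_le (summable_shift_rpow (by norm_num))
lemma summable_TT : Summable TT :=
  Summable.of_nonneg_of_le (fun k => (TT_pos k).le) TT_le (summable_shift_rpow (by norm_num))

lemma aa_zero : aa 0 = 1 := by norm_num [aa, rp_zero]

lemma aa_succ (k : ℕ) : aa (k+1) = aa k * ((1/8+(k:ℝ))*(3/8+(k:ℝ))/(((k:ℝ)+1)^2)) := by
  have hF := fact_pos' k
  rw [aa, aa, rp_succ, rp_succ, Nat.factorial_succ]
  push_cast
  field_simp

lemma pair_id (k j : ℕ) :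
    ((k:ℝ)+(j:ℝ)+1)^3 * (aa k * aa (j+1))
      - ((k:ℝ)+(j:ℝ)+1/4)*((k:ℝ)+(j:ℝ)+1/2)*((k:ℝ)+(j:ℝ)+3/4) * (aa k * aa j)
    = (((k:ℝ)+1)^2*(2*(k:ℝ)-1-3*((k:ℝ)+(j:ℝ))) * (aa (k+1) * aa j)
      - (k:ℝ)^2*(2*(k:ℝ)-3-3*((k:ℝ)+(j:ℝ))) * (aa k * aa (j+1))) := by
  rw [aa_succ k, aa_succ j]
  have h1 : ((k:ℝ)+1) ≠ 0 := by positivity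
  have h2 : ((j:ℝ)+1) ≠ 0 := by positivity
  field_simp
  ring

noncomputable def gg (n k : ℕ) : ℝ := (k:ℝ)^2*(2*(k:ℝ)-3-3*(n:ℝ)) * (aa k * aa (n+1-k))

lemma tele (n : ℕ) :
    ∑ k ∈ Finset.range (n+1),
      (((n:ℝ)+1)^3 * (aa k * aa (n+1-k))
        - ((n:ℝ)+1/4)*((n:ℝ)+1/2)*((n:ℝ)+3/4) * (aa k * aa (n-k)))
    = -(((n:ℝ)+1)^3) * aa (n+1) := by
  have hterm : ∀ k ∈ Finset.range (n+1),
      (((n:ℝ)+1)^3 * (aa k * aa (n+1-k))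
        - ((n:ℝ)+1/4)*((n:ℝ)+1/2)*((n:ℝ)+3/4) * (aa k * aa (n-k)))
      = gg n (k+1) - gg n k := by
    intro k hk
    have hk' : k ≤ n := Nat.lt_succ_iff.mp (Finset.mem_range.mp hk)
    have hj : n + 1 - k = (n-k) + 1 := by omega
    have hj2 : n + 1 - (k+1) = n - k := by omega
    have hcast : (n:ℝ) = (k:ℝ) + ((n-k:ℕ):ℝ) := by
      have := Nat.cast_sub (R := ℝ) hk'
      rw [this]; ring
    rw [gg, gg, hj, hj2, hcast]
    push_cast
    have := pair_id k (n-k)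
    push_cast at this
    linarith [this]
  rw [Finset.sum_congr rfl hterm, Finset.sum_range_sub (gg n)]
  rw [gg, gg]
  norm_num [aa_zero]
  ring

noncomputable def ccl (n : ℕ) : ℝ := ∑ k ∈ Finset.range (n+1), aa k * aa (n - k)

lemma ccl_rec (n : ℕ) :
    ((n:ℝ)+1)^3 * ccl (n+1) = ((n:ℝ)+1/4)*((n:ℝ)+1/2)*((n:ℝ)+3/4) * ccl n := by
  have ht := tele n
  rw [Finset.sum_sub_distrib, ← Finset.mul_sum, ← Finset.mul_sum] at ht
  have hc : ccl (n+1) = (∑ k ∈ Finset.range (n+1), aa k * aa (n+1-k)) + aa (n+1) := by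
    rw [ccl, Finset.sum_range_succ]
    norm_num [aa_zero]
  have hcc : ccl n = ∑ k ∈ Finset.range (n+1), aa k * aa (n - k) := rfl
  rw [hc, hcc]
  linarith [ht]

lemma tt_rec (n : ℕ) :
    ((n:ℝ)+1)^3 * tt (n+1) = ((n:ℝ)+1/4)*((n:ℝ)+1/2)*((n:ℝ)+3/4) * tt n := by
  have hF := fact_pos' n
  rw [tt, tt, rp_succ, rp_succ, rp_succ, Nat.factorial_succ]
  push_cast
  field_simp
  ring

lemma ccl_eq_tt (n : ℕ) : ccl n = tt n := by
  induction n with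
  | zero => norm_num [ccl, tt, rp_zero, aa_zero]
  | succ m ih =>
    have h1 := ccl_rec m
    have h2 := tt_rec m
    rw [ih] at h1
    have h3 : (((m:ℝ)+1)^3) ≠ 0 := by positivity
    have := h1.trans h2.symm
    exact mul_left_cancel₀ h3 this

lemma clausen_sum : (∑' k, aa k) * (∑' k, aa k) = ∑' n, tt n := by
  have hnorm : Summable (fun k => ‖aa k‖) := by
    refine summable_aa.congr (fun k => ?_)
    rw [Real.norm_eq_abs, _root_.abs_of_pos (aa_pos k)]
  rw [tsum_mul_tsum_eq_tsum_sum_range_of_summable_norm hnorm hnorm]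
  exact tsum_congr (fun n => by rw [show ∑ k ∈ Finset.range (n+1), aa k * aa (n-k) = ccl n from rfl, ccl_eq_tt])

lemma coef_le_one {α : ℝ} (hα0 : 0 < α) (hα1 : α ≤ 1) (β : ℝ) (hβ0 : 0 < β) (hβ1 : β ≤ 1) (n : ℕ) :
    rp α n * rp β n / ((n.factorial:ℝ) * n.factorial) ≤ 1 := by
  have hF := fact_pos' n
  have h1 : rp α n ≤ (n.factorial:ℝ) := by rw [← rp_one n]; exact rp_le_of_le hα0 hα1 n
  have h2 : rp β n ≤ (n.factorial:ℝ) := by rw [← rp_one n]; exact rp_le_of_le hβ0 hβ1 n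
  rw [div_le_one (by positivity)]
  exact mul_le_mul h1 h2 (rp_pos hβ0 n).le hF.le

lemma gauss_general {a b d : ℝ} (ha0 : 0 < a) (ha1 : a < 1) (hb : 0 < b) (hd : 0 < d) (had : a < d)
    (hsum : Summable (fun k => rp a k * rp b k / (rp (b+d) k * (k.factorial:ℝ)))) :
    (∑' k, rp a k * rp b k / (rp (b+d) k * (k.factorial:ℝ))) * Ibeta b d = Ibeta b (d-a) := by
  have hbd := rp_pos (add_pos hb hd)
  have hc0 : ∀ k : ℕ, 0 ≤ rp a k / (k.factorial:ℝ) := fun k => by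
    have := rp_pos ha0 k; have := fact_pos' k; positivity
  have hc1 : ∀ k : ℕ, rp a k / (k.factorial:ℝ) ≤ 1 := fun k => by
    rw [div_le_one (fact_pos' k), ← rp_one k]; exact rp_le_of_le ha0 ha1.le k
  have hrearr : ∀ k : ℕ, rp a k / (k.factorial:ℝ) * (rp b k / rp (b+d) k)
      = rp a k * rp b k / (rp (b+d) k * (k.factorial:ℝ)) := fun k => by
    rw [div_mul_div_comm, mul_comm ((k.factorial:ℝ)) _]
  have hsum' : Summable (fun k => rp a k / (k.factorial:ℝ) * (rp b k / rp (b+d) k)) :=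
    hsum.congr (fun k => (hrearr k).symm)
  have hser := ser_int hc0 hc1 hb hd hsum'
  rw [show (∑' k, rp a k / (k.factorial:ℝ) * (rp b k / rp (b+d) k))
      = ∑' k, rp a k * rp b k / (rp (b+d) k * (k.factorial:ℝ)) from tsum_congr hrearr] at hser
  rw [← hser, Ibeta]
  refine setIntegral_congr_fun measurableSet_Ioo (fun t ht => ?_)
  have ht0 : (0:ℝ) < t := ht.1
  have ht1 : t < 1 := ht.2
  have h1t : (0:ℝ) < 1 - t := by linarith
  rw [(bin ha0 ha1 ht0.le ht1).tsum_eq, mul_assoc, ← Real.rpow_add h1t,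
    show (d - 1 + -a : ℝ) = d - a - 1 by ring]

lemma gauss_aa : (∑' k, aa k) * Ibeta (3/8) (5/8) = Ibeta (3/8) (1/2) := by
  have h := gauss_general (a := 1/8) (b := 3/8) (d := 5/8) (by norm_num) (by norm_num)
    (by norm_num) (by norm_num) (by norm_num) ?_
  · rw [show (5/8 - 1/8 : ℝ) = 1/2 by norm_num] at h
    rw [← h]
    congr 1
    refine tsum_congr (fun k => ?_)
    rw [aa, show (3/8 + 5/8 : ℝ) = 1 by norm_num, rp_one, mul_comm ((k.factorial:ℝ))]
  · refine summable_aa.congr (fun k => ?_)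
    rw [aa, show (3/8 + 5/8 : ℝ) = 1 by norm_num, rp_one, mul_comm ((k.factorial:ℝ))]

noncomputable def Fc (x : ℝ) : ℝ :=
  ∑' n, (rp (1/4) n * rp (1/2) n / ((n.factorial:ℝ) * n.factorial)) * x^n
noncomputable def Gc (x : ℝ) : ℝ :=
  ∑' n, (rp (3/4) n * rp (1/2) n / ((n.factorial:ℝ) * n.factorial)) * x^n

lemma int_rep (α : ℝ) (hα0 : 0 < α) (hα1 : α < 1) {x : ℝ} (hx0 : 0 ≤ x) (hx1 : x < 1) :
    (∑' n, (rp α n * rp (1/2) n / ((n.factorial:ℝ) * n.factorial)) * x^n) * Ibeta (1/2) (1/2)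
      = ∫ t in Ioo (0:ℝ) 1, t^((1/2:ℝ)-1) * (1-t)^((1/2:ℝ)-1) * (1-t*x)^(-α) := by
  have hc0 : ∀ k : ℕ, 0 ≤ rp α k / (k.factorial:ℝ) * x^k := fun k => by
    have := rp_pos hα0 k; have := fact_pos' k; positivity
  have hc1 : ∀ k : ℕ, rp α k / (k.factorial:ℝ) * x^k ≤ 1 := fun k => by
    have h1 : rp α k / (k.factorial:ℝ) ≤ 1 := by
      rw [div_le_one (fact_pos' k), ← rp_one k]; exact rp_le_of_le hα0 hα1.le k
    have h2 : x^k ≤ 1 := pow_le_one₀ hx0 hx1.le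
    have := rp_pos hα0 k; have := fact_pos' k
    nlinarith [pow_nonneg hx0 k]
  have hsum' : Summable (fun k => (rp α k / (k.factorial:ℝ) * x^k) * (rp (1/2) k / rp (1/2+1/2) k)) := by
    refine Summable.of_nonneg_of_le (fun k => ?_) (fun k => ?_) (summable_geometric_of_lt_one hx0 hx1)
    · have := rp_pos hα0 k; have := fact_pos' k
      have := rp_pos (by norm_num : (0:ℝ) < 1/2) k
      have := rp_pos (by norm_num : (0:ℝ) < 1/2+1/2) k
      positivity
    · have h1 : rp α k / (k.factorial:ℝ) ≤ 1 := by
        rw [div_le_one (fact_pos' k), ← rp_one k]; exact rp_le_of_le hα0 hα1.le k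
      have h2 : rp (1/2) k / rp (1/2+1/2) k ≤ 1 := by
        rw [div_le_one (rp_pos (by norm_num) k)]
        exact rp_le_of_le (by norm_num) (by norm_num) k
      have h3 : (0:ℝ) ≤ x^k := pow_nonneg hx0 k
      have h4 := rp_pos (by norm_num : (0:ℝ) < 1/2) k
      have h5 := rp_pos (by norm_num : (0:ℝ) < 1/2+1/2) k
      have h6 := rp_pos hα0 k
      have h7 := fact_pos' k
      calc rp α k / (k.factorial:ℝ) * x^k * (rp (1/2) k / rp (1/2+1/2) k)
          ≤ 1 * x^k * 1 := by
            refine mul_le_mul (mul_le_mul h1 (le_refl _) h3 (by norm_num)) h2 (by positivity) (by positivity)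
        _ = x^k := by ring
  have hser := ser_int hc0 hc1 (by norm_num : (0:ℝ) < 1/2) (by norm_num : (0:ℝ) < 1/2) hsum'
  rw [show (∑' k, (rp α k / (k.factorial:ℝ) * x^k) * (rp (1/2) k / rp (1/2+1/2) k))
      = ∑' n, (rp α n * rp (1/2) n / ((n.factorial:ℝ) * n.factorial)) * x^n from ?_] at hser
  · rw [← hser]
    refine setIntegral_congr_fun measurableSet_Ioo (fun t ht => ?_)
    have ht0 : (0:ℝ) < t := ht.1
    have ht1 : t < 1 := ht.2
    have htx0 : 0 ≤ t*x := mul_nonneg ht0.le hx0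
    have htx1 : t*x < 1 := by nlinarith
    have hb := bin hα0 hα1 htx0 htx1
    have : (∑' k : ℕ, rp α k / (k.factorial:ℝ) * x^k * t^k) = (1-t*x)^(-α) := by
      rw [← hb.tsum_eq]
      refine tsum_congr (fun k => ?_)
      rw [mul_pow]
      ring
    rw [this]
  · refine tsum_congr (fun k => ?_)
    rw [show (1/2 + 1/2 : ℝ) = 1 by norm_num, rp_one]
    field_simp

lemma euler_tr {x : ℝ} (hx0 : 0 ≤ x) (hx1 : x < 1) : Fc x = (1-x)^((1/4):ℝ) * Gc x := by
  have E1 := int_rep (1/4) (by norm_num) (by norm_num) hx0 hx1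
  have E3 := int_rep (3/4) (by norm_num) (by norm_num) hx0 hx1
  have SW := sub_swap (p := 1/2) (q := 1/2) (r := -(1/4)) (y := x)
    (by norm_num) (by norm_num) hx0 hx1
  rw [show (-(1/2+1/2+-(1/4)) : ℝ) = -(3/4) by norm_num, show ((1/2:ℝ)+(-(1/4))) = 1/4 by norm_num] at SW
  rw [← E3] at SW
  rw [show (-(1/4) : ℝ) = -(1/4:ℝ) from rfl] at E1
  rw [SW] at E1
  have hI := Ibeta_pos (by norm_num : (0:ℝ) < 1/2) (by norm_num : (0:ℝ) < 1/2)
  have : Fc x * Ibeta (1/2) (1/2) = ((1-x)^((1/4):ℝ) * Gc x) * Ibeta (1/2) (1/2) := by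
    rw [Fc, E1, Gc]; ring
  exact mul_right_cancel₀ hI.ne' this

lemma m1 : (∑' n, TT n) * Ibeta (1/4) (1/2)
    = ∫ x in Ioo (0:ℝ) 1, x^((1/4:ℝ)-1) * (1-x)^((1/2:ℝ)-1) * Fc x := by
  have hc0 : ∀ n : ℕ, 0 ≤ rp (1/4) n * rp (1/2) n / ((n.factorial:ℝ) * n.factorial) := fun n => by
    have := rp_pos (by norm_num : (0:ℝ) < 1/4) n
    have := rp_pos (by norm_num : (0:ℝ) < 1/2) n
    have := fact_pos' n
    positivity
  have hc1 : ∀ n : ℕ, rp (1/4) n * rp (1/2) n / ((n.factorial:ℝ) * n.factorial) ≤ 1 :=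
    fun n => coef_le_one (by norm_num) (by norm_num) _ (by norm_num) (by norm_num) n
  have hre : ∀ n : ℕ, rp (1/4) n * rp (1/2) n / ((n.factorial:ℝ) * n.factorial)
      * (rp (1/4) n / rp (1/4+1/2) n) = TT n := fun n => by
    rw [TT, show (1/4+1/2 : ℝ) = 3/4 by norm_num, div_mul_div_comm]
    ring
  have hsum' : Summable (fun n => rp (1/4) n * rp (1/2) n / ((n.factorial:ℝ) * n.factorial)
      * (rp (1/4) n / rp (1/4+1/2) n)) := summable_TT.congr (fun n => (hre n).symm)
  have hser := ser_int hc0 hc1 (by norm_num : (0:ℝ) < 1/4) (by norm_num : (0:ℝ) < 1/2) hsum'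
  rw [show (∑' n, rp (1/4) n * rp (1/2) n / ((n.factorial:ℝ) * n.factorial)
      * (rp (1/4) n / rp (1/4+1/2) n)) = ∑' n, TT n from tsum_congr hre] at hser
  rw [← hser]
  rfl

lemma m3 : (∑' n, tt n) * Ibeta (1/4) (3/4)
    = ∫ x in Ioo (0:ℝ) 1, x^((1/4:ℝ)-1) * (1-x)^((3/4:ℝ)-1) * Gc x := by
  have hc0 : ∀ n : ℕ, 0 ≤ rp (3/4) n * rp (1/2) n / ((n.factorial:ℝ) * n.factorial) := fun n => by
    have := rp_pos (by norm_num : (0:ℝ) < 3/4) n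
    have := rp_pos (by norm_num : (0:ℝ) < 1/2) n
    have := fact_pos' n
    positivity
  have hc1 : ∀ n : ℕ, rp (3/4) n * rp (1/2) n / ((n.factorial:ℝ) * n.factorial) ≤ 1 :=
    fun n => coef_le_one (by norm_num) (by norm_num) _ (by norm_num) (by norm_num) n
  have hre : ∀ n : ℕ, rp (3/4) n * rp (1/2) n / ((n.factorial:ℝ) * n.factorial)
      * (rp (1/4) n / rp (1/4+3/4) n) = tt n := fun n => by
    rw [tt, show (1/4+3/4 : ℝ) = 1 by norm_num, rp_one, div_mul_div_comm]
    ring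
  have hsum' : Summable (fun n => rp (3/4) n * rp (1/2) n / ((n.factorial:ℝ) * n.factorial)
      * (rp (1/4) n / rp (1/4+3/4) n)) := summable_tt.congr (fun n => (hre n).symm)
  have hser := ser_int hc0 hc1 (by norm_num : (0:ℝ) < 1/4) (by norm_num : (0:ℝ) < 3/4) hsum'
  rw [show (∑' n, rp (3/4) n * rp (1/2) n / ((n.factorial:ℝ) * n.factorial)
      * (rp (1/4) n / rp (1/4+3/4) n)) = ∑' n, tt n from tsum_congr hre] at hser
  rw [← hser]
  rfl

lemma m_main : (∑' n, TT n) * Ibeta (1/4) (1/2) = (∑' n, tt n) * Ibeta (1/4) (3/4) := by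
  rw [m1, m3]
  refine setIntegral_congr_fun measurableSet_Ioo (fun x hx => ?_)
  have hx0 : (0:ℝ) < x := hx.1
  have hx1 : x < 1 := hx.2
  have h1x : (0:ℝ) < 1 - x := by linarith
  rw [euler_tr hx0.le hx1]
  rw [show x^((1/4:ℝ)-1) * (1-x)^((1/2:ℝ)-1) * ((1-x)^((1/4):ℝ) * Gc x)
      = x^((1/4:ℝ)-1) * ((1-x)^((1/2:ℝ)-1) * (1-x)^((1/4):ℝ)) * Gc x by ring,
    ← Real.rpow_add h1x, show ((1/2:ℝ)-1) + (1/4:ℝ) = (3/4:ℝ)-1 by norm_num]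

lemma refl_key : 2 * Real.Gamma (1/4) * Real.Gamma (3/4) * Real.Gamma (1/2)^2
    = (Real.Gamma (1/8) * Real.Gamma (7/8)) * (Real.Gamma (3/8) * Real.Gamma (5/8)) := by
  have r1 := Real.Gamma_mul_Gamma_one_sub (1/8)
  have r2 := Real.Gamma_mul_Gamma_one_sub (3/8)
  have r3 := Real.Gamma_mul_Gamma_one_sub (1/4)
  rw [show (1 - 1/8 : ℝ) = 7/8 by norm_num] at r1
  rw [show (1 - 3/8 : ℝ) = 5/8 by norm_num] at r2
  rw [show (1 - 1/4 : ℝ) = 3/4 by norm_num] at r3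
  have r4 : Real.Gamma (1/2)^2 = Real.pi := by
    rw [Real.Gamma_one_half_eq, Real.sq_sqrt Real.pi_pos.le]
  have hs : Real.sin (Real.pi * (3/8)) = Real.cos (Real.pi * (1/8)) := by
    rw [show Real.pi * (3/8) = Real.pi/2 - Real.pi * (1/8) by ring, Real.sin_pi_div_two_sub]
  have hd : Real.sin (Real.pi * (1/4)) = 2 * Real.sin (Real.pi * (1/8)) * Real.cos (Real.pi * (1/8)) := by
    rw [show Real.pi * (1/4) = 2 * (Real.pi * (1/8)) by ring, Real.sin_two_mul]
  have hspos : 0 < Real.sin (Real.pi * (1/8)) := by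
    apply Real.sin_pos_of_pos_of_lt_pi
    · positivity
    · nlinarith [Real.pi_pos]
  have hcpos : 0 < Real.cos (Real.pi * (1/8)) := by
    have := Real.sin_pos_of_pos_of_lt_pi (x := Real.pi * (3/8))
      (by positivity) (by nlinarith [Real.pi_pos])
    rwa [hs] at this
  rw [show (2:ℝ) * Real.Gamma (1/4) * Real.Gamma (3/4) * Real.Gamma (1/2)^2
    = 2 * (Real.Gamma (1/4) * Real.Gamma (3/4)) * Real.Gamma (1/2)^2 by ring, r3, r4, r1, r2, hs, hd]
  field_simp

lemma final_real : Real.Gamma (1/4) * Real.Gamma (1/2)^2 / Real.Gamma (3/4) * (∑' n, TT n)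
    = Real.Gamma (1/2) * Real.Gamma (1/8) * Real.Gamma (3/8)
      / (2 * Real.Gamma (5/8) * Real.Gamma (7/8)) := by
  have hm := m_main
  have hcl := clausen_sum
  have hga := gauss_aa
  have key : (∑' n, TT n) * (Ibeta (1/4) (1/2) * Ibeta (3/8) (5/8)^2)
      = Ibeta (1/4) (3/4) * Ibeta (3/8) (1/2)^2 := by
    have e1 : (∑' n, TT n) * Ibeta (1/4) (1/2) * Ibeta (3/8) (5/8)^2
        = (∑' n, tt n) * Ibeta (1/4) (3/4) * Ibeta (3/8) (5/8)^2 := by rw [hm]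
    have e2 : (∑' n, tt n) * Ibeta (3/8) (5/8)^2
        = ((∑' k, aa k) * Ibeta (3/8) (5/8))^2 := by rw [← hcl]; ring
    rw [hga] at e2
    linear_combination e1 + Ibeta (1/4) (3/4) * e2
  have G18 := Real.Gamma_pos_of_pos (by norm_num : (0:ℝ) < 1/8)
  have G14 := Real.Gamma_pos_of_pos (by norm_num : (0:ℝ) < 1/4)
  have G38 := Real.Gamma_pos_of_pos (by norm_num : (0:ℝ) < 3/8)
  have G12 := Real.Gamma_pos_of_pos (by norm_num : (0:ℝ) < 1/2)
  have G58 := Real.Gamma_pos_of_pos (by norm_num : (0:ℝ) < 5/8)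
  have G34 := Real.Gamma_pos_of_pos (by norm_num : (0:ℝ) < 3/4)
  have G78 := Real.Gamma_pos_of_pos (by norm_num : (0:ℝ) < 7/8)
  have i1 : Ibeta (1/4) (1/2) = Real.Gamma (1/4) * Real.Gamma (1/2) / Real.Gamma (3/4) := by
    rw [Ibeta_eq (by norm_num) (by norm_num)]; norm_num
  have i2 : Ibeta (1/4) (3/4) = Real.Gamma (1/4) * Real.Gamma (3/4) := by
    rw [Ibeta_eq (by norm_num) (by norm_num)]; norm_num [Real.Gamma_one]
  have i3 : Ibeta (3/8) (5/8) = Real.Gamma (3/8) * Real.Gamma (5/8) := by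
    rw [Ibeta_eq (by norm_num) (by norm_num)]; norm_num [Real.Gamma_one]
  have i4 : Ibeta (3/8) (1/2) = Real.Gamma (3/8) * Real.Gamma (1/2) / Real.Gamma (7/8) := by
    rw [Ibeta_eq (by norm_num) (by norm_num)]; norm_num
  rw [i1, i2, i3, i4] at key
  have hS2 : (∑' n, TT n)
      = Real.Gamma (3/4)^2 * Real.Gamma (1/2) / (Real.Gamma (7/8)^2 * Real.Gamma (5/8)^2) := by
    have hpos : (0:ℝ) < Real.Gamma (1/4) * Real.Gamma (1/2) / Real.Gamma (3/4)
        * (Real.Gamma (3/8) * Real.Gamma (5/8))^2 := by positivity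
    refine mul_right_cancel₀ hpos.ne' ?_
    rw [key]
    field_simp
  rw [hS2]
  have hrk := refl_key
  rw [div_mul_div_comm, div_eq_div_iff (by positivity) (by positivity)]
  linear_combination (Real.Gamma (1/2) * Real.Gamma (3/4) * Real.Gamma (5/8) * Real.Gamma (7/8)) * hrk


/-- The evaluation of `g₀(0)` for the mirror quartic (proof of Theorem 7.1):
`Γ(1/4)Γ(1/2)²/Γ(3/4) · ₃F₂(1/4,1/2,1/4;3/4,1;1)
  = Γ(1/2)Γ(1/8)Γ(3/8)/(2Γ(5/8)Γ(7/8))`, the `₃F₂`-series being convergent. -/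
theorem quartic_g0_eval :
    Summable (fun k : ℕ =>
      cpoch (1/4) k * cpoch (1/2) k * cpoch (1/4) k /
        (cpoch (3/4) k * cpoch 1 k * (k.factorial : ℂ))) ∧
    Complex.Gamma (1/4) * Complex.Gamma (1/2) ^ 2 / Complex.Gamma (3/4) *
        ∑' k : ℕ,
          cpoch (1/4) k * cpoch (1/2) k * cpoch (1/4) k /
            (cpoch (3/4) k * cpoch 1 k * (k.factorial : ℂ)) =
      Complex.Gamma (1/2) * Complex.Gamma (1/8) * Complex.Gamma (3/8) /
        (2 * Complex.Gamma (5/8) * Complex.Gamma (7/8)) := by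
  have hc : ∀ (a : ℝ) (k : ℕ), cpoch ((a:ℝ):ℂ) k = ((rp a k : ℝ):ℂ) := by
    intro a k
    rw [cpoch, rp]
    push_cast
    rfl
  have hterm : ∀ k : ℕ, cpoch (1/4) k * cpoch (1/2) k * cpoch (1/4) k /
        (cpoch (3/4) k * cpoch 1 k * (k.factorial : ℂ)) = ((TT k : ℝ) : ℂ) := by
    intro k
    rw [show (1/4 : ℂ) = ((1/4 : ℝ):ℂ) by norm_num, show (1/2 : ℂ) = ((1/2:ℝ):ℂ) by norm_num,
      show (3/4 : ℂ) = ((3/4:ℝ):ℂ) by norm_num, show (1 : ℂ) = ((1:ℝ):ℂ) by norm_num,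
      hc, hc, hc, hc, TT, rp_one]
    push_cast
    ring
  have hsummable : Summable (fun k : ℕ =>
      cpoch (1/4) k * cpoch (1/2) k * cpoch (1/4) k /
        (cpoch (3/4) k * cpoch 1 k * (k.factorial : ℂ))) := by
    refine Summable.congr ?_ (fun k => (hterm k).symm)
    refine Summable.of_norm ?_
    refine summable_TT.congr (fun k => ?_)
    rw [Complex.norm_real, Real.norm_eq_abs, _root_.abs_of_pos (TT_pos k)]
  refine ⟨hsummable, ?_⟩
  rw [show (∑' k : ℕ, cpoch (1/4) k * cpoch (1/2) k * cpoch (1/4) k /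
        (cpoch (3/4) k * cpoch 1 k * (k.factorial : ℂ))) = ∑' k : ℕ, ((TT k : ℝ):ℂ)
      from tsum_congr hterm]
  rw [show (∑' k : ℕ, ((TT k : ℝ):ℂ)) = (((∑' k, TT k : ℝ)):ℂ)
      from (Complex.ofRealCLM.map_tsum summable_TT).symm]
  rw [show (1/4 : ℂ) = ((1/4 : ℝ):ℂ) by norm_num, show (1/2 : ℂ) = ((1/2:ℝ):ℂ) by norm_num,
    show (3/4 : ℂ) = ((3/4:ℝ):ℂ) by norm_num, show (1/8 : ℂ) = ((1/8:ℝ):ℂ) by norm_num,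
    show (3/8 : ℂ) = ((3/8:ℝ):ℂ) by norm_num, show (5/8 : ℂ) = ((5/8:ℝ):ℂ) by norm_num,
    show (7/8 : ℂ) = ((7/8:ℝ):ℂ) by norm_num, Complex.Gamma_ofReal, Complex.Gamma_ofReal,
    Complex.Gamma_ofReal, Complex.Gamma_ofReal, Complex.Gamma_ofReal, Complex.Gamma_ofReal,
    Complex.Gamma_ofReal]
  exact_mod_cast final_real
end
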